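/- arXiv:math/0309439 — 10 statements merged into one kernel-verified Lean document; each statement's English description precedes it below -/
import Mathlib

section
/- Let (F,W) be a mixed Hodge structure on V. Then the Deligne bigrading is given by the explicit formula I^{p,q} = F^p ∩ W_{p+q} ∩ ( conj(F^q) ∩ W_{p+q} + Σ_{j>0} conj(F^{q−j}) ∩ W_{p+q−1−j} ) for all p, q. -/
open Complex

noncomputable section

/-- A conjugation (real structure) on a complex vector space: an additive,
conjugate-semilinear involution of `V`. -/
structure Conjugation (V : Type*) [AddCommGroup V] [Module ℂ V] where
  toFun : V →ₛₗ[starRingEnd ℂ] V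
  invol : ∀ v, toFun (toFun v) = v

namespace Conjugation

variable {V : Type*} [AddCommGroup V] [Module ℂ V]

/-- The image of a complex subspace under the conjugation; it is again a
complex subspace. -/
def submap (c : Conjugation V) (S : Submodule ℂ V) : Submodule ℂ V where
  carrier := c.toFun '' (S : Set V)
  add_mem' := by
    rintro _ _ ⟨x, hx, rfl⟩ ⟨y, hy, rfl⟩
    exact ⟨x + y, S.add_mem hx hy, map_add _ _ _⟩
  zero_mem' := ⟨0, S.zero_mem, map_zero _⟩
  smul_mem' := by
    rintro a _ ⟨x, hx, rfl⟩
    refine ⟨(starRingEnd ℂ) a • x, S.smul_mem _ hx, ?_⟩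
    rw [map_smulₛₗ, starRingEnd_self_apply]

end Conjugation

/-- `(F, W)` is a mixed Hodge structure on `V` relative to the conjugation `c`:
`F` is a finite decreasing filtration by complex subspaces, `W` is a finite
increasing filtration by real (conjugation-stable) subspaces, and `F` induces
on each graded piece `Gr^W_k = W_k / W_{k-1}` a pure Hodge structure of
weight `k`. -/
structure IsMHS {V : Type*} [AddCommGroup V] [Module ℂ V] (c : Conjugation V)
    (F W : ℤ → Submodule ℂ V) : Prop where
  antitone_F : Antitone F
  exists_F_top : ∃ p, F p = ⊤
  exists_F_bot : ∃ p, F p = ⊥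
  monotone_W : Monotone W
  exists_W_bot : ∃ k, W k = ⊥
  exists_W_top : ∃ k, W k = ⊤
  real_W : ∀ k, ∀ v ∈ W k, c.toFun v ∈ W k
  graded_sup : ∀ k p : ℤ,
    ((F p ⊓ W k).map (W (k-1)).mkQ) ⊔ ((c.submap (F (k - p + 1)) ⊓ W k).map (W (k-1)).mkQ)
      = (W k).map (W (k-1)).mkQ
  graded_inf : ∀ k p : ℤ,
    ((F p ⊓ W k).map (W (k-1)).mkQ) ⊓ ((c.submap (F (k - p + 1)) ⊓ W k).map (W (k-1)).mkQ)
      = ⊥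

/-- `I` is a Deligne bigrading for the pair of filtrations `(F, W)`:
`V = ⊕_{p,q} I^{p,q}`, `F^p = ⊕_{a ≥ p} I^{a,b}`, `W_k = ⊕_{a+b ≤ k} I^{a,b}`,
and `conj (I^{p,q}) ⊆ I^{q,p} + ⊕_{r<q,s<p} I^{r,s}`. -/
structure IsDeligneBigrading {V : Type*} [AddCommGroup V] [Module ℂ V] (c : Conjugation V)
    (F W : ℤ → Submodule ℂ V) (I : ℤ → ℤ → Submodule ℂ V) : Prop where
  internal : DirectSum.IsInternal (fun pq : ℤ × ℤ => I pq.1 pq.2)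
  hF : ∀ p : ℤ, F p = ⨆ pq : ℤ × ℤ, ⨆ _ : p ≤ pq.1, I pq.1 pq.2
  hW : ∀ k : ℤ, W k = ⨆ pq : ℤ × ℤ, ⨆ _ : pq.1 + pq.2 ≤ k, I pq.1 pq.2
  conj_cond : ∀ p q : ℤ, ∀ v ∈ I p q,
    c.toFun v ∈ I q p ⊔ ⨆ pq : ℤ × ℤ, ⨆ _ : pq.1 < q ∧ pq.2 < p, I pq.1 pq.2

instance : RingHomSurjective (starRingEnd ℂ) :=
  ⟨fun x => ⟨(starRingEnd ℂ) x, by simp⟩⟩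

/-- For an independent family of submodules, the intersection of two
sub-sums is the sub-sum over the conjunction of index predicates. -/
theorem iSupIndep_biSup_inf_biSup {ι R M' : Type*} [Ring R] [AddCommGroup M'] [Module R M']
    {p : ι → Submodule R M'} (hp : iSupIndep p) (Pr Q : ι → Prop) {v : M'}
    (h1 : v ∈ ⨆ i, ⨆ _ : Pr i, p i) (h2 : v ∈ ⨆ i, ⨆ _ : Q i, p i) :
    v ∈ ⨆ i, ⨆ _ : Pr i ∧ Q i, p i := by
  classical
  rw [Submodule.mem_iSup_iff_exists_finsupp] at h1 h2
  obtain ⟨f, hf, hfv⟩ := h1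
  obtain ⟨g, hg, hgv⟩ := h2
  have hfp : ∀ i, f i ∈ p i := by
    intro i
    by_cases h : Pr i
    · have := hf i; rwa [iSup_pos h] at this
    · have := hf i; rw [iSup_neg h, Submodule.mem_bot] at this
      rw [this]; exact zero_mem _
  have hgp : ∀ i, g i ∈ p i := by
    intro i
    by_cases h : Q i
    · have := hg i; rwa [iSup_pos h] at this
    · have := hg i; rw [iSup_neg h, Submodule.mem_bot] at this
      rw [this]; exact zero_mem _
  have hfPr : ∀ i, f i ≠ 0 → Pr i := by
    intro i hi
    by_contra h
    have := hf i; rw [iSup_neg h, Submodule.mem_bot] at this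
    exact hi this
  have hgQ : ∀ i, g i ≠ 0 → Q i := by
    intro i hi
    by_contra h
    have := hg i; rw [iSup_neg h, Submodule.mem_bot] at this
    exact hi this
  set u : ι →₀ M' := f - g with hu
  have husum : (u.sum fun _ x => x) = 0 := by
    rw [hu, Finsupp.sum_sub_index (fun i b₁ b₂ => rfl)]
    rw [hfv, hgv, sub_self]
  have hueq : ∀ i, u i = 0 := by
    intro i
    by_cases hmem : i ∈ u.support
    · have hsum : ∑ j ∈ u.support, u j = 0 := husum
      have herase : u i = -∑ j ∈ u.support.erase i, u j := by
        have h' := Finset.add_sum_erase u.support u hmem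
        rw [hsum] at h'
        exact eq_neg_of_add_eq_zero_left h'
      have hmem1 : u i ∈ p i := by
        rw [hu]; exact sub_mem (hfp i) (hgp i)
      have hmem2 : u i ∈ ⨆ j, ⨆ _ : j ≠ i, p j := by
        rw [herase]
        refine neg_mem (Submodule.sum_mem _ fun j hj => ?_)
        have hji : j ≠ i := Finset.ne_of_mem_erase hj
        have : u j ∈ p j := by rw [hu]; exact sub_mem (hfp j) (hgp j)
        exact Submodule.mem_iSup_of_mem j (Submodule.mem_iSup_of_mem hji this)
      exact (Submodule.disjoint_def.mp (hp i)) _ hmem1 hmem2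
    · exact Finsupp.notMem_support_iff.mp hmem
  have hfg : f = g := by
    ext i
    have := hueq i
    rw [hu] at this
    have h2 : f i - g i = 0 := by simpa using this
    exact sub_eq_zero.mp h2
  rw [← hfv]
  rw [Finsupp.sum]
  refine Submodule.sum_mem _ fun i hi => ?_
  have hfi : f i ≠ 0 := Finsupp.mem_support_iff.mp hi
  have hPr : Pr i := hfPr i hfi
  have hQ : Q i := by
    refine hgQ i ?_
    rw [← hfg]; exact hfi
  exact Submodule.mem_iSup_of_mem i (Submodule.mem_iSup_of_mem ⟨hPr, hQ⟩ (hfp i))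

theorem Conjugation.submap_eq_map {V : Type*} [AddCommGroup V] [Module ℂ V]
    (c : Conjugation V) (S : Submodule ℂ V) : c.submap S = S.map c.toFun := by
  ext x
  exact Iff.rfl

/-- **Explicit formula for the Deligne bigrading**:
`I^{p,q} = F^p ∩ W_{p+q} ∩ ( conj(F^q) ∩ W_{p+q} + Σ_{j>0} conj(F^{q-j}) ∩ W_{p+q-1-j} )`. -/
theorem deligne_bigrading_formula
    {V : Type*} [AddCommGroup V] [Module ℂ V] [FiniteDimensional ℂ V]
    (c : Conjugation V) (F W : ℤ → Submodule ℂ V) (h : IsMHS c F W)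
    (I : ℤ → ℤ → Submodule ℂ V) (hI : IsDeligneBigrading c F W I) :
    ∀ p q : ℤ, I p q = F p ⊓ W (p + q) ⊓
      ((c.submap (F q) ⊓ W (p + q)) ⊔
        ⨆ j : ℤ, ⨆ _ : 0 < j, (c.submap (F (q - j)) ⊓ W (p + q - 1 - j))) := by
  intro p q
  classical
  have hind : iSupIndep (fun pq : ℤ × ℤ => I pq.1 pq.2) := hI.internal.submodule_iSupIndep
  have hIF : ∀ a b : ℤ, I a b ≤ F a := by
    intro a b
    rw [hI.hF a]
    exact le_iSup_of_le (a, b) (le_iSup_of_le le_rfl le_rfl)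
  have hIW : ∀ a b k : ℤ, a + b ≤ k → I a b ≤ W k := by
    intro a b k hk
    rw [hI.hW k]
    exact le_iSup_of_le (a, b) (le_iSup_of_le hk le_rfl)
  have hWreal : ∀ k : ℤ, (W k).map c.toFun ≤ W k := by
    rintro k _ ⟨x, hx, rfl⟩; exact h.real_W k x hx
  have hconj : ∀ a b : ℤ, (I a b).map c.toFun ≤
      I b a ⊔ ⨆ pq : ℤ × ℤ, ⨆ _ : pq.1 < b ∧ pq.2 < a, I pq.1 pq.2 := by
    rintro a b _ ⟨x, hx, rfl⟩; exact hI.conj_cond a b x hx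
  apply le_antisymm
  · -- forward inclusion
    refine le_inf (le_inf (hIF p q) (hIW p q _ le_rfl)) ?_
    intro v hv
    have h1 : c.toFun v ∈ I q p ⊔ ⨆ pq : ℤ × ℤ, ⨆ _ : pq.1 < q ∧ pq.2 < p, I pq.1 pq.2 :=
      hI.conj_cond p q v hv
    have h3 : v ∈ (I q p ⊔ ⨆ pq : ℤ × ℤ,
        ⨆ _ : pq.1 < q ∧ pq.2 < p, I pq.1 pq.2).map c.toFun := by
      rw [show v = c.toFun (c.toFun v) from (c.invol v).symm]
      exact Submodule.mem_map_of_mem h1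
    refine SetLike.le_def.mp ?_ h3
    rw [Submodule.map_sup]
    apply sup_le
    · apply le_sup_of_le_left
      refine le_inf ?_ ?_
      · rw [c.submap_eq_map]
        exact Submodule.map_mono (hIF q p)
      · exact le_trans (Submodule.map_mono (hIW q p (p + q) (by omega))) (hWreal _)
    · rw [Submodule.map_iSup]
      refine iSup_le fun pq => ?_
      rw [Submodule.map_iSup]
      refine iSup_le fun hpq => ?_
      apply le_sup_of_le_right
      refine le_iSup_of_le (q - pq.1) (le_iSup_of_le (by omega) (le_inf ?_ ?_))
      · rw [c.submap_eq_map, show q - (q - pq.1) = pq.1 from by omega]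
        exact Submodule.map_mono (hIF pq.1 pq.2)
      · refine le_trans (Submodule.map_mono (hIW pq.1 pq.2 (p + q - 1 - (q - pq.1)) ?_))
          (hWreal _)
        omega
  · -- reverse inclusion
    intro v hv
    obtain ⟨⟨hvF, hvW⟩, hv2⟩ := hv
    set S12 : ℤ × ℤ → Prop :=
      fun pq => (q ≤ pq.2 ∧ pq.1 + pq.2 ≤ p + q) ∨ pq.1 < p with hS12def
    -- step lemma: image of a component under conjugation
    have hstep : ∀ a b : ℤ, S12 (b, a) → b ≤ p →
        (I a b).map c.toFun ≤ ⨆ pq : ℤ × ℤ, ⨆ _ : S12 pq, I pq.1 pq.2 := by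
      intro a b hba hbp
      refine le_trans (hconj a b) (sup_le ?_ ?_)
      · exact le_iSup_of_le (b, a) (le_iSup_of_le hba le_rfl)
      · refine iSup_le fun pq => iSup_le fun hpq => ?_
        exact le_iSup_of_le pq (le_iSup_of_le (Or.inr (lt_of_lt_of_le hpq.1 hbp)) le_rfl)
    -- the first summand lands in the S12 sum
    have hX : c.submap (F q) ⊓ W (p + q) ≤ ⨆ pq : ℤ × ℤ, ⨆ _ : S12 pq, I pq.1 pq.2 := by
      rintro x ⟨⟨y, hyF, rfl⟩, hxW⟩
      have hyW : y ∈ W (p + q) := by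
        have := h.real_W _ _ hxW
        rwa [c.invol y] at this
      have hyF' : y ∈ F q := hyF
      rw [hI.hF q] at hyF'
      rw [hI.hW (p + q)] at hyW
      have hy : y ∈ ⨆ pq : ℤ × ℤ,
          ⨆ _ : q ≤ pq.1 ∧ pq.1 + pq.2 ≤ p + q, I pq.1 pq.2 :=
        iSupIndep_biSup_inf_biSup hind _ _ hyF' hyW
      have himg : c.toFun y ∈ (⨆ pq : ℤ × ℤ,
          ⨆ _ : q ≤ pq.1 ∧ pq.1 + pq.2 ≤ p + q, I pq.1 pq.2).map c.toFun :=
        Submodule.mem_map_of_mem hy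
      refine SetLike.le_def.mp ?_ himg
      rw [Submodule.map_iSup]
      refine iSup_le fun pq => ?_
      rw [Submodule.map_iSup]
      refine iSup_le fun hpq => ?_
      exact hstep pq.1 pq.2 (Or.inl ⟨hpq.1, by omega⟩) (by omega)
    -- the second summand lands in the S12 sum
    have hY : (⨆ j : ℤ, ⨆ _ : 0 < j, (c.submap (F (q - j)) ⊓ W (p + q - 1 - j))) ≤
        ⨆ pq : ℤ × ℤ, ⨆ _ : S12 pq, I pq.1 pq.2 := by
      refine iSup_le fun j => iSup_le fun hj => ?_
      rintro x ⟨⟨y, hyF, rfl⟩, hxW⟩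
      have hyW : y ∈ W (p + q - 1 - j) := by
        have := h.real_W _ _ hxW
        rwa [c.invol y] at this
      have hyF' : y ∈ F (q - j) := hyF
      rw [hI.hF (q - j)] at hyF'
      rw [hI.hW (p + q - 1 - j)] at hyW
      have hy : y ∈ ⨆ pq : ℤ × ℤ,
          ⨆ _ : q - j ≤ pq.1 ∧ pq.1 + pq.2 ≤ p + q - 1 - j, I pq.1 pq.2 :=
        iSupIndep_biSup_inf_biSup hind _ _ hyF' hyW
      have himg : c.toFun y ∈ (⨆ pq : ℤ × ℤ,
          ⨆ _ : q - j ≤ pq.1 ∧ pq.1 + pq.2 ≤ p + q - 1 - j, I pq.1 pq.2).map c.toFun :=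
        Submodule.mem_map_of_mem hy
      refine SetLike.le_def.mp ?_ himg
      rw [Submodule.map_iSup]
      refine iSup_le fun pq => ?_
      rw [Submodule.map_iSup]
      refine iSup_le fun hpq => ?_
      exact hstep pq.1 pq.2 (Or.inr (by omega)) (by omega)
    have hvS12 : v ∈ ⨆ pq : ℤ × ℤ, ⨆ _ : S12 pq, I pq.1 pq.2 :=
      sup_le hX hY hv2
    rw [hI.hF p] at hvF
    rw [hI.hW (p + q)] at hvW
    have hvS3 : v ∈ ⨆ pq : ℤ × ℤ,
        ⨆ _ : p ≤ pq.1 ∧ pq.1 + pq.2 ≤ p + q, I pq.1 pq.2 :=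
      iSupIndep_biSup_inf_biSup hind _ _ hvF hvW
    have hvfin : v ∈ ⨆ pq : ℤ × ℤ,
        ⨆ _ : (p ≤ pq.1 ∧ pq.1 + pq.2 ≤ p + q) ∧ S12 pq, I pq.1 pq.2 :=
      iSupIndep_biSup_inf_biSup hind _ _ hvS3 hvS12
    refine SetLike.le_def.mp ?_ hvfin
    refine iSup_le fun pq => iSup_le fun hpq => ?_
    obtain ⟨a, b⟩ := pq
    obtain ⟨⟨h1, h2⟩, h3⟩ := hpq
    have hab : a = p ∧ b = q := by
      rcases h3 with ⟨h4, h5⟩ | h6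
      · constructor <;> omega
      · exact absurd h6 (by omega)
    rw [hab.1, hab.2]
end
end

section
/- Let (F,W) be a mixed Hodge structure on V and let g ∈ GL(V) satisfy either (i) g commutes with conjugation and g(W_k) = W_k for all k, or (ii) g = exp(λ) with λ ∈ Λ_{(F,W)}. Then (gF, W) is again a mixed Hodge structure (where (gF)^p = g(F^p)), and its Deligne bigrading satisfies I^{p,q}_{(gF,W)} = g(I^{p,q}_{(F,W)}) for all p, q. -/
open Complex

noncomputable section

/-- The bidegree-`(r,s)` part `gl^{r,s}` of `End(V)` induced by a bigrading `I` of `V`. -/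
def glrs {V : Type*} [AddCommGroup V] [Module ℂ V]
    (I : ℤ → ℤ → Submodule ℂ V) (r s : ℤ) : Submodule ℂ (Module.End ℂ V) where
  carrier := {α | ∀ p q : ℤ, ∀ v ∈ I p q, α v ∈ I (p + r) (q + s)}
  add_mem' := by
    intro α β hα hβ p q v hv
    simpa [LinearMap.add_apply] using
      Submodule.add_mem _ (hα p q v hv) (hβ p q v hv)
  zero_mem' := by
    intro p q v hv
    simp
  smul_mem' := by
    intro t α hα p q v hv
    simpa [LinearMap.smul_apply] using Submodule.smul_mem _ t (hα p q v hv)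

/-- `Λ_{(F,W)} = ⊕_{r<0, s<0} gl^{r,s}`, computed from the bigrading `I` of `(F,W)`. -/
def Lambda {V : Type*} [AddCommGroup V] [Module ℂ V]
    (I : ℤ → ℤ → Submodule ℂ V) : Submodule ℂ (Module.End ℂ V) :=
  ⨆ rs : ℤ × ℤ, ⨆ _ : rs.1 < 0 ∧ rs.2 < 0, glrs I rs.1 rs.2

/-- The exponential of an endomorphism of a finite-dimensional space, given as the
finite sum `Σ_{n ≤ dim V} α^n / n!`; it agrees with the analytic exponential whenever
`α` is nilpotent (as is every element of `Λ_{(F,W)}`). -/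
def expNil {V : Type*} [AddCommGroup V] [Module ℂ V] [FiniteDimensional ℂ V]
    (α : Module.End ℂ V) : Module.End ℂ V :=
  ∑ n ∈ Finset.range (Module.finrank ℂ V + 1), ((n.factorial : ℂ))⁻¹ • α ^ n

section MHSAux

variable {V : Type*} [AddCommGroup V] [Module ℂ V]

lemma le_biSup'' {ι : Type*} (S : ι → Submodule ℂ V) {P : ι → Prop} {i : ι} (h : P i) :
    S i ≤ ⨆ j, ⨆ _ : P j, S j :=
  le_iSup_of_le i (le_iSup (fun _ : P i => S i) h)

lemma map_biSup' {V₂ : Type*} [AddCommGroup V₂] [Module ℂ V₂] (f : V →ₗ[ℂ] V₂)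
    {ι : Type*} (S : ι → Submodule ℂ V) (P : ι → Prop) :
    (⨆ j, ⨆ _ : P j, S j).map f = ⨆ j, ⨆ _ : P j, (S j).map f := by
  rw [Submodule.map_iSup]
  exact iSup_congr fun i => Submodule.map_iSup f _

/-- Preimage of a submodule under a conjugation. -/
def Conjugation.cpre (c : Conjugation V) (T : Submodule ℂ V) : Submodule ℂ V where
  carrier := {v | c.toFun v ∈ T}
  add_mem' := by
    intro a b ha hb
    simp only [Set.mem_setOf_eq, map_add] at *
    exact T.add_mem ha hb
  zero_mem' := by simp
  smul_mem' := by
    intro a v hv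
    simp only [Set.mem_setOf_eq, map_smulₛₗ] at *
    exact T.smul_mem _ hv

lemma Conjugation.mem_cpre {c : Conjugation V} {T : Submodule ℂ V} {v : V} :
    v ∈ c.cpre T ↔ c.toFun v ∈ T := Iff.rfl

lemma Conjugation.mem_submap' {c : Conjugation V} {S : Submodule ℂ V} {x : V} :
    x ∈ c.submap S ↔ ∃ y, y ∈ S ∧ c.toFun y = x := Iff.rfl

lemma biSupInfBiSup {ι : Type*} [DecidableEq ι] {S : ι → Submodule ℂ V} (hS : iSupIndep S)
    (P Q : ι → Prop) {v : V} (hp : v ∈ ⨆ i, ⨆ _ : P i, S i) (hq : v ∈ ⨆ i, ⨆ _ : Q i, S i) :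
    v ∈ ⨆ i, ⨆ _ : P i ∧ Q i, S i := by
  classical
  rw [Submodule.mem_biSup_iff_exists_dfinsupp] at hp hq ⊢
  obtain ⟨f, hf⟩ := hp
  obtain ⟨g, hg⟩ := hq
  have hinj := hS.dfinsupp_lsum_injective
  have hfg : f.filter P = g.filter Q := hinj (hf.trans hg.symm)
  refine ⟨f.filter P, ?_⟩
  have hfilter : (f.filter P).filter (fun i => P i ∧ Q i) = f.filter P := by
    ext i
    have h1 : (f.filter P) i = (g.filter Q) i := by rw [hfg]
    by_cases hPi : P i
    · by_cases hQi : Q i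
      · simp [DFinsupp.filter_apply, hPi, hQi]
      · simp only [DFinsupp.filter_apply, hPi, hQi, if_pos, if_neg, not_false_iff] at h1
        simp [DFinsupp.filter_apply, hPi, hQi, h1]
    · simp [DFinsupp.filter_apply, hPi]
  rw [hfilter]
  exact hf

/-- `⊕_{r<a, s<b} I^{r,s}`. -/
def Lset (I : ℤ → ℤ → Submodule ℂ V) (a b : ℤ) : Submodule ℂ V :=
  ⨆ pq : ℤ × ℤ, ⨆ _ : pq.1 < a ∧ pq.2 < b, I pq.1 pq.2

lemma I_le_Lset (I : ℤ → ℤ → Submodule ℂ V) (a b p q : ℤ) (h1 : a < p) (h2 : b < q) :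
    I a b ≤ Lset I p q :=
  le_biSup'' (fun pq : ℤ × ℤ => I pq.1 pq.2) (i := (a, b)) ⟨h1, h2⟩

lemma Lset_mono {I : ℤ → ℤ → Submodule ℂ V} {a b a' b' : ℤ} (ha : a ≤ a') (hb : b ≤ b') :
    Lset I a b ≤ Lset I a' b' :=
  iSup₂_le fun rs hrs => I_le_Lset I rs.1 rs.2 a' b' (hrs.1.trans_le ha) (hrs.2.trans_le hb)

section FactsFromBigrading

variable {c : Conjugation V} {F W : ℤ → Submodule ℂ V} {I : ℤ → ℤ → Submodule ℂ V}

lemma IW (hI : IsDeligneBigrading c F W I) (a b m : ℤ) (h : a + b ≤ m) : I a b ≤ W m := by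
  rw [hI.hW m]
  exact le_biSup'' (fun pq : ℤ × ℤ => I pq.1 pq.2) (i := (a, b)) h

lemma IF (hI : IsDeligneBigrading c F W I) (a b m : ℤ) (h : m ≤ a) : I a b ≤ F m := by
  rw [hI.hF m]
  exact le_biSup'' (fun pq : ℤ × ℤ => I pq.1 pq.2) (i := (a, b)) h

lemma LW (hI : IsDeligneBigrading c F W I) (a b m : ℤ) (h : a + b ≤ m + 2) :
    Lset I a b ≤ W m :=
  iSup₂_le fun rs hrs => IW hI rs.1 rs.2 m (by obtain ⟨h1, h2⟩ := hrs; omega)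

lemma Wmono (hI : IsDeligneBigrading c F W I) : Monotone W := by
  intro a b hab
  rw [hI.hW a, hI.hW b]
  exact iSup₂_le fun pq hpq => le_biSup'' (fun pq : ℤ × ℤ => I pq.1 pq.2) (i := pq) (hpq.trans hab)

lemma conjL (hI : IsDeligneBigrading c F W I) (a b : ℤ) :
    ∀ v ∈ I a b, c.toFun v ∈ I b a ⊔ Lset I b a :=
  hI.conj_cond a b

lemma cW (hI : IsDeligneBigrading c F W I) (m : ℤ) : ∀ v ∈ W m, c.toFun v ∈ W m := by
  have h1 : W m ≤ c.cpre (W m) := by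
    conv_lhs => rw [hI.hW m]
    refine iSup₂_le fun pq hpq => ?_
    intro v hv
    refine Conjugation.mem_cpre.mpr ?_
    exact (sup_le (IW hI pq.2 pq.1 m (by omega)) (LW hI pq.2 pq.1 m (by omega)))
      (conjL hI pq.1 pq.2 v hv)
  exact fun v hv => h1 hv

lemma indJ (hI : IsDeligneBigrading c F W I) :
    iSupIndep (fun pq : ℤ × ℤ => I pq.1 pq.2) :=
  ((DirectSum.isInternal_submodule_iff_iSupIndep_and_iSup_eq_top _).mp hI.internal).1

/-- The two "pure Hodge structure on the graded pieces" conditions follow from the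
existence of a Deligne bigrading. -/
lemma gradedAux (hI : IsDeligneBigrading c F W I) (k p : ℤ) :
    (((F p ⊓ W k).map (W (k-1)).mkQ) ⊔ ((c.submap (F (k - p + 1)) ⊓ W k).map (W (k-1)).mkQ)
        = (W k).map (W (k-1)).mkQ) ∧
    (((F p ⊓ W k).map (W (k-1)).mkQ) ⊓ ((c.submap (F (k - p + 1)) ⊓ W k).map (W (k-1)).mkQ)
        = ⊥) := by
  classical
  set Q : V →ₗ[ℂ] V ⧸ W (k-1) := (W (k-1)).mkQ with hQdef
  have hker : ∀ v ∈ W (k-1), Q v = 0 := by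
    intro v hv
    rwa [hQdef, Submodule.mkQ_apply, Submodule.Quotient.mk_eq_zero]
  have hbot : (W (k-1)).map Q = ⊥ := by
    rw [eq_bot_iff]
    rintro x ⟨v, hv, rfl⟩
    exact (Submodule.mem_bot _).mpr (hker v hv)
  constructor
  · -- graded_sup
    apply le_antisymm
    · exact sup_le (Submodule.map_mono inf_le_right) (Submodule.map_mono inf_le_right)
    · conv_lhs => rw [hI.hW k]
      refine le_trans (le_of_eq (map_biSup' Q _ _)) ?_
      refine iSup₂_le fun pq hpq => ?_
      rw [Submodule.map_le_iff_le_comap]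
      intro v hv
      rw [Submodule.mem_comap]
      by_cases hple : p ≤ pq.1
      · exact Submodule.mem_sup_left
          (Submodule.mem_map_of_mem ⟨IF hI pq.1 pq.2 p hple hv, IW hI pq.1 pq.2 k hpq hv⟩)
      · by_cases hk1 : pq.1 + pq.2 ≤ k - 1
        · have h0 : Q v = 0 := hker v (IW hI pq.1 pq.2 (k-1) hk1 hv)
          rw [h0]
          exact Submodule.zero_mem _
        · have hsum : pq.1 + pq.2 = k := by omega
          have hcv := conjL hI pq.1 pq.2 v hv
          obtain ⟨u, hu, w, hw, hcvuw⟩ := Submodule.mem_sup.mp hcv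
          have hvuw : v = c.toFun u + c.toFun w := by
            calc v = c.toFun (c.toFun v) := (c.invol v).symm
              _ = c.toFun (u + w) := by rw [hcvuw]
              _ = c.toFun u + c.toFun w := map_add _ _ _
          have hwW : w ∈ W (k-2) := LW hI pq.2 pq.1 (k-2) (by omega) hw
          have hcwW : c.toFun w ∈ W (k-1) := cW hI (k-1) w (Wmono hI (by omega) hwW)
          have hcuW : c.toFun u ∈ W k := by
            have h2 : c.toFun u = v - c.toFun w := by rw [hvuw]; abel
            rw [h2]
            exact Submodule.sub_mem _ (IW hI pq.1 pq.2 k hpq hv)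
              (Wmono hI (by omega) hcwW)
          have hcuF : c.toFun u ∈ c.submap (F (k - p + 1)) :=
            ⟨u, IF hI pq.2 pq.1 (k - p + 1) (by omega) hu, rfl⟩
          have hq2 : Q v = Q (c.toFun u) := by
            rw [hvuw, map_add, hker _ hcwW, add_zero]
          rw [hq2]
          exact Submodule.mem_sup_right (Submodule.mem_map_of_mem ⟨hcuF, hcuW⟩)
  · -- graded_inf
    set M₁ : Submodule ℂ V := ⨆ pq : ℤ × ℤ, ⨆ _ : p ≤ pq.1 ∧ pq.1 + pq.2 = k, I pq.1 pq.2
      with hM₁def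
    set M₂ : Submodule ℂ V := ⨆ pq : ℤ × ℤ, ⨆ _ : pq.1 ≤ p - 1 ∧ pq.1 + pq.2 = k, I pq.1 pq.2
      with hM₂def
    have hA : (F p ⊓ W k).map Q ≤ M₁.map Q := by
      have hFW : F p ⊓ W k ≤ M₁ ⊔ W (k-1) := by
        rintro v ⟨hv1, hv2⟩
        rw [hI.hF p] at hv1
        rw [hI.hW k] at hv2
        have hmem := biSupInfBiSup (indJ hI) (fun pq => p ≤ pq.1)
          (fun pq => pq.1 + pq.2 ≤ k) hv1 hv2
        have hle2 : (⨆ pq : ℤ × ℤ, ⨆ _ : (p ≤ pq.1) ∧ (pq.1 + pq.2 ≤ k), I pq.1 pq.2)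
            ≤ M₁ ⊔ W (k-1) := by
          refine iSup₂_le fun pq hpq => ?_
          by_cases hk1 : pq.1 + pq.2 = k
          · exact le_trans (le_biSup'' (fun pq : ℤ × ℤ => I pq.1 pq.2) (i := pq)
              ⟨hpq.1, hk1⟩) le_sup_left
          · exact le_trans (IW hI pq.1 pq.2 (k-1)
              (by obtain ⟨h1, h2⟩ := hpq; omega)) le_sup_right
        exact hle2 hmem
      refine le_trans (Submodule.map_mono hFW) ?_
      rw [Submodule.map_sup, hbot, sup_bot_eq]
    have hB : (c.submap (F (k - p + 1)) ⊓ W k).map Q ≤ M₂.map Q := by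
      have hBW : c.submap (F (k - p + 1)) ⊓ W k ≤ M₂ ⊔ W (k-1) := by
        rintro x ⟨hx1, hxW⟩
        obtain ⟨y, hy, rfl⟩ := Conjugation.mem_submap'.mp hx1
        have hyW : y ∈ W k := by
          have h2 := cW hI k _ hxW
          rwa [c.invol] at h2
        rw [hI.hF] at hy
        rw [hI.hW] at hyW
        have hmem := biSupInfBiSup (indJ hI) (fun pq => k - p + 1 ≤ pq.1)
          (fun pq => pq.1 + pq.2 ≤ k) hy hyW
        have hclaim : (⨆ pq : ℤ × ℤ, ⨆ _ : (k - p + 1 ≤ pq.1) ∧ (pq.1 + pq.2 ≤ k),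
            I pq.1 pq.2) ≤ c.cpre (M₂ ⊔ W (k-1)) := by
          refine iSup₂_le fun pq hpq => ?_
          intro v hv
          refine Conjugation.mem_cpre.mpr ?_
          have hsle : I pq.2 pq.1 ⊔ Lset I pq.2 pq.1 ≤ M₂ ⊔ W (k-1) := by
            refine sup_le ?_ ?_
            · by_cases hk1 : pq.1 + pq.2 = k
              · refine le_trans ?_ le_sup_left
                exact le_biSup'' (fun pq : ℤ × ℤ => I pq.1 pq.2) (i := (pq.2, pq.1))
                  ⟨show pq.2 ≤ p - 1 by omega, show pq.2 + pq.1 = k by omega⟩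
              · exact le_trans (IW hI pq.2 pq.1 (k-1)
                  (by obtain ⟨h1, h2⟩ := hpq; omega)) le_sup_right
            · exact le_trans (LW hI pq.2 pq.1 (k-1) (by obtain ⟨h1, h2⟩ := hpq; omega))
                le_sup_right
          exact hsle (conjL hI pq.1 pq.2 v hv)
        exact hclaim hmem
      refine le_trans (Submodule.map_mono hBW) ?_
      rw [Submodule.map_sup, hbot, sup_bot_eq]
    rw [eq_bot_iff]
    rintro x ⟨hx1, hx2⟩
    obtain ⟨m₁, hm₁, hxm₁⟩ := hA hx1
    obtain ⟨m₂, hm₂, hxm₂⟩ := hB hx2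
    have hdiffker : m₁ - m₂ ∈ W (k-1) := by
      have h2 : Q (m₁ - m₂) = 0 := by rw [map_sub, hxm₁, hxm₂, sub_self]
      rwa [hQdef, Submodule.mkQ_apply, Submodule.Quotient.mk_eq_zero] at h2
    have hM₁le : M₁ ≤ ⨆ pq : ℤ × ℤ, ⨆ _ : pq.1 + pq.2 = k, I pq.1 pq.2 :=
      iSup₂_le fun pq hpq => le_biSup'' (fun pq : ℤ × ℤ => I pq.1 pq.2) (i := pq) hpq.2
    have hM₂le : M₂ ≤ ⨆ pq : ℤ × ℤ, ⨆ _ : pq.1 + pq.2 = k, I pq.1 pq.2 :=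
      iSup₂_le fun pq hpq => le_biSup'' (fun pq : ℤ × ℤ => I pq.1 pq.2) (i := pq) hpq.2
    have hdiffM : m₁ - m₂ ∈ ⨆ pq : ℤ × ℤ, ⨆ _ : pq.1 + pq.2 = k, I pq.1 pq.2 :=
      Submodule.sub_mem _ (hM₁le hm₁) (hM₂le hm₂)
    rw [hI.hW (k-1)] at hdiffker
    have hdiff0 : m₁ - m₂ = 0 := by
      have hmem := biSupInfBiSup (indJ hI) (fun pq => pq.1 + pq.2 = k)
        (fun pq => pq.1 + pq.2 ≤ k - 1) hdiffM hdiffker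
      have hle : (⨆ pq : ℤ × ℤ, ⨆ _ : (pq.1 + pq.2 = k) ∧ (pq.1 + pq.2 ≤ k - 1),
          I pq.1 pq.2) ≤ ⊥ :=
        iSup₂_le fun pq hpq => absurd hpq (by omega)
      exact (Submodule.mem_bot _).mp (hle hmem)
    have hm₁₂ : m₁ = m₂ := by
      have := sub_eq_zero.mp hdiff0
      exact this
    have hm₁0 : m₁ = 0 := by
      rw [hM₁def] at hm₁
      rw [hM₂def, ← hm₁₂] at hm₂
      have hmem := biSupInfBiSup (indJ hI) (fun pq => p ≤ pq.1 ∧ pq.1 + pq.2 = k)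
        (fun pq => pq.1 ≤ p - 1 ∧ pq.1 + pq.2 = k) hm₁ hm₂
      have hle : (⨆ pq : ℤ × ℤ, ⨆ _ : (p ≤ pq.1 ∧ pq.1 + pq.2 = k) ∧
          (pq.1 ≤ p - 1 ∧ pq.1 + pq.2 = k), I pq.1 pq.2) ≤ ⊥ :=
        iSup₂_le fun pq hpq => absurd hpq (by omega)
      exact (Submodule.mem_bot _).mp (hle hmem)
    rw [← hxm₁, hm₁0, map_zero]
    exact Submodule.zero_mem _

end FactsFromBigrading

lemma map_equiv_eq_map_lin (g : V ≃ₗ[ℂ] V) (S : Submodule ℂ V) :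
    S.map (g : V →ₛₗ[RingHom.id ℂ] V) = S.map (g : V →ₗ[ℂ] V) := rfl

/-- Endomorphisms mapping every `I^{p,q}` into `⊕_{r<p,s<q} I^{r,s}`. -/
def glL (I : ℤ → ℤ → Submodule ℂ V) : Submodule ℂ (Module.End ℂ V) where
  carrier := {α | ∀ p q : ℤ, ∀ v ∈ I p q, α v ∈ Lset I p q}
  add_mem' := by
    intro α β hα hβ p q v hv
    simpa [LinearMap.add_apply] using
      Submodule.add_mem _ (hα p q v hv) (hβ p q v hv)
  zero_mem' := by
    intro p q v hv
    simp
  smul_mem' := by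
    intro t α hα p q v hv
    simpa [LinearMap.smul_apply] using Submodule.smul_mem _ t (hα p q v hv)

lemma Lambda_le_glL (I : ℤ → ℤ → Submodule ℂ V) : Lambda I ≤ glL I := by
  refine iSup₂_le fun rs hrs => ?_
  intro α hα p q v hv
  exact I_le_Lset I (p + rs.1) (q + rs.2) p q (by omega) (by omega) (hα p q v hv)

/-- Main auxiliary: everything follows once we know that `g` fixes `W` and that the
conjugation condition holds for the mapped bigrading. -/
lemma mainAux (c : Conjugation V) (F W : ℤ → Submodule ℂ V) (h : IsMHS c F W)
    (I : ℤ → ℤ → Submodule ℂ V) (hI : IsDeligneBigrading c F W I) (g : V ≃ₗ[ℂ] V)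
    (hmapW : ∀ k, (W k).map (g : V →ₗ[ℂ] V) = W k)
    (hconj : ∀ p q : ℤ, ∀ v ∈ (I p q).map (g : V →ₗ[ℂ] V),
      c.toFun v ∈ (I q p).map (g : V →ₗ[ℂ] V) ⊔
        ⨆ pq : ℤ × ℤ, ⨆ _ : pq.1 < q ∧ pq.2 < p, (I pq.1 pq.2).map (g : V →ₗ[ℂ] V)) :
    IsMHS c (fun p => (F p).map (g : V →ₗ[ℂ] V)) W ∧
    IsDeligneBigrading c (fun p => (F p).map (g : V →ₗ[ℂ] V)) W
      (fun p q => (I p q).map (g : V →ₗ[ℂ] V)) := by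
  obtain ⟨hind, htop⟩ :=
    (DirectSum.isInternal_submodule_iff_iSupIndep_and_iSup_eq_top _).mp hI.internal
  have hI' : IsDeligneBigrading c (fun p => (F p).map (g : V →ₗ[ℂ] V)) W
      (fun p q => (I p q).map (g : V →ₗ[ℂ] V)) := by
    constructor
    · rw [DirectSum.isInternal_submodule_iff_iSupIndep_and_iSup_eq_top]
      constructor
      · have h2 := (iSupIndep_map_orderIso_iff
          (Submodule.orderIsoMapComap (g : V ≃ₗ[ℂ] V))).mpr hind
        have h3 : (⇑(Submodule.orderIsoMapComap (g : V ≃ₗ[ℂ] V)) ∘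
            fun pq : ℤ × ℤ => I pq.1 pq.2) =
            fun pq : ℤ × ℤ => (I pq.1 pq.2).map (g : V →ₗ[ℂ] V) := by
          funext pq
          rw [Function.comp_apply, Submodule.orderIsoMapComap_apply, map_equiv_eq_map_lin]
        rwa [h3] at h2
      · rw [← Submodule.map_iSup, htop, Submodule.map_top, LinearMap.range_eq_top]
        exact g.surjective
    · intro p
      rw [hI.hF p]
      exact map_biSup' _ _ _
    · intro k
      conv_lhs => rw [← hmapW k, hI.hW k]
      exact map_biSup' _ _ _
    · exact hconj
  refine ⟨?_, hI'⟩
  constructor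
  · exact fun a b hab => Submodule.map_mono (h.antitone_F hab)
  · obtain ⟨p, hp⟩ := h.exists_F_top
    exact ⟨p, by rw [hp, Submodule.map_top, LinearMap.range_eq_top]; exact g.surjective⟩
  · obtain ⟨p, hp⟩ := h.exists_F_bot
    exact ⟨p, by rw [hp, Submodule.map_bot]⟩
  · exact h.monotone_W
  · exact h.exists_W_bot
  · exact h.exists_W_top
  · exact h.real_W
  · exact fun k p => (gradedAux hI' k p).1
  · exact fun k p => (gradedAux hI' k p).2

end MHSAux

/-- **Equivariance of the Deligne bigrading.** If `g ∈ GL(V)` either (i) is real and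
preserves `W`, or (ii) is `exp λ` for some `λ ∈ Λ_{(F,W)}`, then `(gF, W)` is again a
mixed Hodge structure and its Deligne bigrading is `g · I^{p,q}_{(F,W)}`. -/
theorem deligne_bigrading_equivariant
    {V : Type*} [AddCommGroup V] [Module ℂ V] [FiniteDimensional ℂ V]
    (c : Conjugation V) (F W : ℤ → Submodule ℂ V) (h : IsMHS c F W)
    (I : ℤ → ℤ → Submodule ℂ V) (hI : IsDeligneBigrading c F W I)
    (g : V ≃ₗ[ℂ] V)
    (hg : ((∀ v, g (c.toFun v) = c.toFun (g v)) ∧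
            ∀ k, (W k).map (g : V →ₗ[ℂ] V) = W k) ∨
          (∃ l : Module.End ℂ V, l ∈ Lambda I ∧ (g : V →ₗ[ℂ] V) = expNil l)) :
    IsMHS c (fun p => (F p).map (g : V →ₗ[ℂ] V)) W ∧
    IsDeligneBigrading c (fun p => (F p).map (g : V →ₗ[ℂ] V)) W
      (fun p q => (I p q).map (g : V →ₗ[ℂ] V)) := by
  rcases hg with ⟨hcomm, hWfix⟩ | ⟨l, hl, hgle⟩
  · -- Case (i): g is real and preserves W
    apply mainAux c F W h I hI g hWfix
    intro p q v hv
    obtain ⟨w, hw, rfl⟩ := hv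
    have h1 := hI.conj_cond p q w hw
    have h2 : c.toFun ((g : V →ₗ[ℂ] V) w) = (g : V →ₗ[ℂ] V) (c.toFun w) :=
      (hcomm w).symm
    rw [h2, ← map_biSup', ← Submodule.map_sup]
    exact Submodule.mem_map_of_mem h1
  · -- Case (ii): g = exp l with l ∈ Λ
    have hlI : ∀ p q : ℤ, ∀ v ∈ I p q, l v ∈ Lset I p q :=
      fun p q v hv => Lambda_le_glL I hl p q v hv
    have hlL : ∀ p q : ℤ, ∀ v ∈ Lset I p q, l v ∈ Lset I p q := by
      intro p q v hv
      have hle : Lset I p q ≤ (Lset I p q).comap l := by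
        refine iSup₂_le fun rs hrs => ?_
        intro w hw
        exact Submodule.mem_comap.mpr
          (Lset_mono hrs.1.le hrs.2.le (hlI rs.1 rs.2 w hw))
      exact hle hv
    have hpowL : ∀ (p q : ℤ) (n : ℕ), ∀ v ∈ Lset I p q, (l ^ n) v ∈ Lset I p q := by
      intro p q n
      induction n with
      | zero => intro v hv; simpa using hv
      | succ n ih =>
        intro v hv
        have h2 : (l ^ (n + 1)) v = (l ^ n) (l v) := by
          rw [pow_succ, Module.End.mul_apply]
        rw [h2]
        exact ih _ (hlL p q v hv)
    have hgd : ∀ (p q : ℤ), ∀ v ∈ I p q,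
        ∃ w ∈ Lset I p q, (g : V →ₗ[ℂ] V) v = v + w := by
      intro p q v hv
      refine ⟨∑ n ∈ (Finset.range (Module.finrank ℂ V + 1)).erase 0,
          ((n.factorial : ℂ))⁻¹ • (l ^ n) v, ?_, ?_⟩
      · refine Submodule.sum_mem _ fun n hn => Submodule.smul_mem _ _ ?_
        obtain ⟨m, rfl⟩ := Nat.exists_eq_succ_of_ne_zero (Finset.ne_of_mem_erase hn)
        have h2 : (l ^ (m + 1)) v = (l ^ m) (l v) := by
          rw [pow_succ, Module.End.mul_apply]
        rw [h2]
        exact hpowL p q m _ (hlI p q v hv)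
      · rw [hgle]
        have hv0 : (0 : ℕ) ∈ Finset.range (Module.finrank ℂ V + 1) := by simp
        have hexp : (expNil l) v = ∑ n ∈ Finset.range (Module.finrank ℂ V + 1),
            ((n.factorial : ℂ))⁻¹ • (l ^ n) v := by
          simp [expNil, LinearMap.sum_apply, LinearMap.smul_apply]
        rw [hexp, ← Finset.sum_erase_add _ _ hv0]
        have h00 : ((Nat.factorial 0 : ℂ))⁻¹ • (l ^ 0) v = v := by
          simp
        rw [h00, add_comm]
    have hgI : ∀ p q : ℤ, (I p q).map (g : V →ₗ[ℂ] V) ≤ I p q ⊔ Lset I p q := by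
      intro p q
      rw [Submodule.map_le_iff_le_comap]
      intro v hv
      obtain ⟨w, hw, heq⟩ := hgd p q v hv
      refine Submodule.mem_comap.mpr ?_
      rw [heq]
      exact Submodule.add_mem _ (Submodule.mem_sup_left hv) (Submodule.mem_sup_right hw)
    have hEq : ∀ S : Submodule ℂ V, S.map (g : V →ₗ[ℂ] V) ≤ S →
        S.map (g : V →ₗ[ℂ] V) = S := fun S hle =>
      Submodule.eq_of_le_of_finrank_le hle (LinearEquiv.finrank_map_eq g S).ge
    have hgL : ∀ p q : ℤ, (Lset I p q).map (g : V →ₗ[ℂ] V) = Lset I p q := by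
      intro p q
      refine hEq _ ?_
      refine le_trans (le_of_eq (map_biSup' (g : V →ₗ[ℂ] V)
        (fun rs : ℤ × ℤ => I rs.1 rs.2) (fun rs => rs.1 < p ∧ rs.2 < q))) ?_
      refine iSup₂_le fun rs hrs => ?_
      exact le_trans (hgI rs.1 rs.2)
        (sup_le (I_le_Lset I rs.1 rs.2 p q hrs.1 hrs.2) (Lset_mono hrs.1.le hrs.2.le))
    have hmapW : ∀ k, (W k).map (g : V →ₗ[ℂ] V) = W k := by
      intro k
      refine hEq _ ?_
      conv_lhs => rw [hI.hW k]
      refine le_trans (le_of_eq (map_biSup' (g : V →ₗ[ℂ] V)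
        (fun pq : ℤ × ℤ => I pq.1 pq.2) (fun pq => pq.1 + pq.2 ≤ k))) ?_
      refine iSup₂_le fun pq hpq => ?_
      exact le_trans (hgI pq.1 pq.2)
        (sup_le (IW hI pq.1 pq.2 k hpq) (LW hI pq.1 pq.2 k (by omega)))
    have hgIL : ∀ q p : ℤ,
        (I q p).map (g : V →ₗ[ℂ] V) ⊔ Lset I q p = I q p ⊔ Lset I q p := by
      intro q p
      refine le_antisymm (sup_le (hgI q p) le_sup_right) (sup_le ?_ le_sup_right)
      intro v hv
      obtain ⟨w, hw, heq⟩ := hgd q p v hv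
      have h2 : v = (g : V →ₗ[ℂ] V) v - w := by rw [heq]; abel
      rw [h2]
      exact Submodule.sub_mem _
        (Submodule.mem_sup_left (Submodule.mem_map_of_mem hv))
        (Submodule.mem_sup_right hw)
    have hcL : ∀ p q : ℤ, ∀ v ∈ Lset I p q, c.toFun v ∈ Lset I q p := by
      intro p q v hv
      have hle : Lset I p q ≤ c.cpre (Lset I q p) := by
        refine iSup₂_le fun rs hrs => ?_
        intro w hw
        refine Conjugation.mem_cpre.mpr ?_
        exact (sup_le (I_le_Lset I rs.2 rs.1 q p hrs.2 hrs.1)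
          (Lset_mono hrs.2.le hrs.1.le)) (conjL hI rs.1 rs.2 w hw)
      exact hle hv
    apply mainAux c F W h I hI g hmapW
    intro p q v hv
    obtain ⟨w0, hw0, rfl⟩ := hv
    obtain ⟨w, hw, heq⟩ := hgd p q w0 hw0
    have hmem : c.toFun ((g : V →ₗ[ℂ] V) w0) ∈ I q p ⊔ Lset I q p := by
      rw [heq, map_add]
      exact Submodule.add_mem _ (conjL hI p q w0 hw0)
        (Submodule.mem_sup_right (hcL p q w hw))
    have hrhs : (I q p).map (g : V →ₗ[ℂ] V) ⊔
        (⨆ rs : ℤ × ℤ, ⨆ _ : rs.1 < q ∧ rs.2 < p, (I rs.1 rs.2).map (g : V →ₗ[ℂ] V))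
        = I q p ⊔ Lset I q p := by
      rw [show (⨆ rs : ℤ × ℤ, ⨆ _ : rs.1 < q ∧ rs.2 < p,
          (I rs.1 rs.2).map (g : V →ₗ[ℂ] V)) = Lset I q p from
        (map_biSup' (g : V →ₗ[ℂ] V) (fun rs : ℤ × ℤ => I rs.1 rs.2)
          (fun rs => rs.1 < q ∧ rs.2 < p)).symm.trans (hgL q p)]
      exact hgIL q p
    rw [hrhs]
    exact hmem
end
end

section
/- Let (F,W) be a mixed Hodge structure on V and let Y = Y_{(F,W)} be its Deligne grading, the semisimple endomorphism of V acting as multiplication by p+q on each I^{p,q}. Then Y − Ȳ ∈ Λ_{(F,W)}, where Ȳ = conj ∘ Y ∘ conj is the conjugate endomorphism. -/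
open Complex

noncomputable section

/-- The conjugate endomorphism `Ȳ = conj ∘ Y ∘ conj` of a complex-linear endomorphism. -/
def conjEnd {V : Type*} [AddCommGroup V] [Module ℂ V] (c : Conjugation V)
    (Y : Module.End ℂ V) : Module.End ℂ V where
  toFun v := c.toFun (Y (c.toFun v))
  map_add' u v := by simp
  map_smul' a v := by
    simp only [map_smulₛₗ, map_smul, starRingEnd_self_apply, RingHom.id_apply]


namespace MHSAux

open DirectSum

variable {V : Type*} [AddCommGroup V] [Module ℂ V]
variable {ι : Type*} [DecidableEq ι] {A : ι → Submodule ℂ V}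

/-- The linear equivalence coming from an internal direct sum decomposition. -/
noncomputable def equivOf (h : DirectSum.IsInternal A) : (⨁ i, A i) ≃ₗ[ℂ] V :=
  LinearEquiv.ofBijective (DirectSum.coeLinearMap A) h

/-- The projection onto the `i`-th component. -/
noncomputable def proj (h : DirectSum.IsInternal A) (i : ι) : Module.End ℂ V :=
  (A i).subtype ∘ₗ (DirectSum.component ℂ ι (fun i => A i) i) ∘ₗ
    ((equivOf h).symm : V →ₗ[ℂ] ⨁ i, A i)

lemma proj_apply (h : DirectSum.IsInternal A) (i : ι) (v : V) :
    proj h i v = (((equivOf h).symm v) i : V) := rfl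

lemma proj_mem (h : DirectSum.IsInternal A) (i : ι) (v : V) : proj h i v ∈ A i :=
  (((equivOf h).symm v) i).2

lemma symm_of_mem (h : DirectSum.IsInternal A) {i : ι} {v : V} (hv : v ∈ A i) :
    (equivOf h).symm v = DirectSum.of (fun i => A i) i ⟨v, hv⟩ := by
  rw [LinearEquiv.symm_apply_eq]
  exact (DirectSum.coeLinearMap_of A i ⟨v, hv⟩).symm

lemma proj_of_mem_same (h : DirectSum.IsInternal A) {i : ι} {v : V} (hv : v ∈ A i) :
    proj h i v = v := by
  rw [proj_apply, symm_of_mem h hv, DirectSum.of_eq_same]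

lemma equivOf_of (h : DirectSum.IsInternal A) (i : ι) (x : A i) :
    equivOf h (DirectSum.of (fun i => A i) i x) = x :=
  DirectSum.coeLinearMap_of A i x

lemma sum_proj (h : DirectSum.IsInternal A) (v : V) (U : Finset ι)
    (hU : ∀ i, ((equivOf h).symm v) i ≠ 0 → i ∈ U) :
    ∑ i ∈ U, proj h i v = v := by
  classical
  have h1 : v = ∑ i ∈ ((equivOf h).symm v).support, proj h i v := by
    conv_lhs => rw [← LinearEquiv.apply_symm_apply (equivOf h) v,
      ← DirectSum.sum_support_of ((equivOf h).symm v)]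
    rw [map_sum]
    exact Finset.sum_congr rfl fun i _ => equivOf_of h i _
  have h2 : ∑ i ∈ ((equivOf h).symm v).support, proj h i v = ∑ i ∈ U, proj h i v := by
    refine Finset.sum_subset (fun i hi => hU i (DFinsupp.mem_support_iff.mp hi)) ?_
    intro i _ hi
    have h0 : ((equivOf h).symm v) i = 0 := by
      by_contra hne
      exact hi (DFinsupp.mem_support_iff.mpr hne)
    rw [proj_apply, h0]; rfl
  rw [← h2]
  exact h1.symm

lemma mem_biSup_iff (h : DirectSum.IsInternal A) (P : ι → Prop) (v : V) :
    v ∈ (⨆ i, ⨆ _ : P i, A i) ↔ ∀ i, ¬ P i → ((equivOf h).symm v) i = 0 := by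
  classical
  constructor
  · intro hv
    set K : Submodule ℂ V := ⨅ i ∈ {i | ¬ P i},
      LinearMap.ker ((DirectSum.component ℂ ι (fun i => A i) i) ∘ₗ
        ((equivOf h).symm : V →ₗ[ℂ] ⨁ i, A i)) with hK
    have hle : (⨆ i, ⨆ _ : P i, A i) ≤ K := by
      refine iSup_le fun j => iSup_le fun hj => ?_
      intro x hx
      rw [hK]
      simp only [Submodule.mem_iInf, Set.mem_setOf_eq]
      intro i hi
      have hij : j ≠ i := fun hji => hi (hji ▸ hj)
      simp only [LinearMap.mem_ker, LinearMap.coe_comp, Function.comp_apply,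
        LinearEquiv.coe_coe]
      rw [← DirectSum.apply_eq_component, symm_of_mem h hx,
        DirectSum.of_eq_of_ne _ _ _ hij.symm]
    intro i hi
    have := hle hv
    rw [hK] at this
    simp only [Submodule.mem_iInf, Set.mem_setOf_eq] at this
    have := this i hi
    simp only [LinearMap.mem_ker, LinearMap.coe_comp, Function.comp_apply,
      LinearEquiv.coe_coe] at this
    exact this
  · intro hv
    have h1 : ∑ i ∈ ((equivOf h).symm v).support, proj h i v = v :=
      sum_proj h v _ (fun i hi => DFinsupp.mem_support_iff.mpr hi)
    rw [← h1]
    refine Submodule.sum_mem _ fun i hi => ?_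
    have hPi : P i := by
      by_contra hP
      exact (DFinsupp.mem_support_iff.mp hi) (hv i hP)
    exact Submodule.mem_iSup_of_mem i (Submodule.mem_iSup_of_mem hPi (proj_mem h i v))

end MHSAux

open DirectSum

/-- The Deligne grading `Y`satisfies `Y - Ȳ ∈ Λ_{(F,W)}`. -/
theorem deligne_grading_sub_conj_mem_Lambda
    {V : Type*} [AddCommGroup V] [Module ℂ V] [FiniteDimensional ℂ V]
    (c : Conjugation V) (F W : ℤ → Submodule ℂ V) (h : IsMHS c F W)
    (I : ℤ → ℤ → Submodule ℂ V) (hI : IsDeligneBigrading c F W I)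
    (Y : Module.End ℂ V)
    (hY : ∀ p q : ℤ, ∀ v ∈ I p q, Y v = ((p + q : ℤ) : ℂ) • v) :
    Y - conjEnd c Y ∈ Lambda I := by
  classical
  set A : ℤ × ℤ → Submodule ℂ V := fun pq => I pq.1 pq.2 with hA
  have hint : DirectSum.IsInternal A := hI.internal
  set β : Module.End ℂ V := Y - conjEnd c Y with hβdef
  have hconjEnd : ∀ v : V, conjEnd c Y v = c.toFun (Y (c.toFun v)) := fun v => rfl
  -- Step 0 : β strictly lowers the bigrading
  have lower : ∀ j : ℤ × ℤ, ∀ v ∈ A j,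
      β v ∈ ⨆ pq : ℤ × ℤ, ⨆ _ : pq.1 < j.1 ∧ pq.2 < j.2, A pq := by
    rintro ⟨p, q⟩ v hv
    set L : Submodule ℂ V := ⨆ pq : ℤ × ℤ, ⨆ _ : pq.1 < q ∧ pq.2 < p, A pq with hL
    set N : Submodule ℂ V := ⨆ pq : ℤ × ℤ, ⨆ _ : pq.1 < p ∧ pq.2 < q, A pq with hN
    have hcv : c.toFun v ∈ I q p ⊔ L := hI.conj_cond p q v hv
    obtain ⟨w, hw, u, hu, hwu⟩ := Submodule.mem_sup.mp hcv
    -- L is Y-invariant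
    have hYL : ∀ x ∈ L, Y x ∈ L := by
      intro x hx
      rw [hL, iSup_subtype'] at hx ⊢
      refine Submodule.iSup_induction (motive := fun x => Y x ∈
          ⨆ i : {pq : ℤ × ℤ // pq.1 < q ∧ pq.2 < p}, A i.1) _ hx
        (fun i y hy => ?_)
        (by show Y 0 ∈ _; rw [map_zero]; exact zero_mem _)
        (fun y z hy hz => by
          have hy' : Y y ∈ ⨆ i : {pq : ℤ × ℤ // pq.1 < q ∧ pq.2 < p}, A i.1 := hy
          have hz' : Y z ∈ ⨆ i : {pq : ℤ × ℤ // pq.1 < q ∧ pq.2 < p}, A i.1 := hz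
          show Y (y + z) ∈ _
          rw [map_add]; exact add_mem hy' hz')
      show Y y ∈ ⨆ i : {pq : ℤ × ℤ // pq.1 < q ∧ pq.2 < p}, A i.1
      rw [hY i.1.1 i.1.2 y hy]
      exact Submodule.smul_mem _ _ (Submodule.mem_iSup_of_mem i hy)
    -- conjugation maps L into N
    have hcL : ∀ x ∈ L, c.toFun x ∈ N := by
      intro x hx
      rw [hL, iSup_subtype'] at hx
      refine Submodule.iSup_induction (motive := fun x => c.toFun x ∈ N) _ hx
        (fun i y hy => ?_)
        (by show c.toFun 0 ∈ N; rw [map_zero]; exact zero_mem N)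
        (fun y z hy hz => by
          have hy' : c.toFun y ∈ N := hy
          have hz' : c.toFun z ∈ N := hz
          show c.toFun (y + z) ∈ N
          rw [map_add]; exact add_mem hy' hz')
      show c.toFun y ∈ N
      obtain ⟨⟨r, s⟩, hr, hs⟩ := i
      have h2 : c.toFun y ∈ I s r ⊔ ⨆ pq : ℤ × ℤ, ⨆ _ : pq.1 < s ∧ pq.2 < r, I pq.1 pq.2 :=
        hI.conj_cond r s y hy
      have hle : I s r ⊔ (⨆ pq : ℤ × ℤ, ⨆ _ : pq.1 < s ∧ pq.2 < r, I pq.1 pq.2) ≤ N := by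
        rw [hN]
        refine sup_le ?_ ?_
        · intro x hx
          exact Submodule.mem_iSup_of_mem (s, r) (Submodule.mem_iSup_of_mem ⟨hs, hr⟩ hx)
        · refine iSup₂_le fun pq hpq => ?_
          intro x hx
          exact Submodule.mem_iSup_of_mem pq
            (Submodule.mem_iSup_of_mem ⟨hpq.1.trans hs, hpq.2.trans hr⟩ hx)
      exact hle h2
    -- the computation
    have hx : ((q + p : ℤ) : ℂ) • u - Y u ∈ L :=
      sub_mem (Submodule.smul_mem _ _ hu) (hYL u hu)
    have key : β v = c.toFun (((q + p : ℤ) : ℂ) • u - Y u) := by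
      have hccv : c.toFun (c.toFun v) = v := c.invol v
      have hYv : Y v = ((p + q : ℤ) : ℂ) • v := hY p q v hv
      have hYw : Y w = ((q + p : ℤ) : ℂ) • w := hY q p w hw
      have hcw : c.toFun w = v - c.toFun u := by
        have : w = c.toFun v - u := by rw [← hwu]; abel
        rw [this, map_sub, hccv]
      have hstep : conjEnd c Y v = ((q + p : ℤ) : ℂ) • (v - c.toFun u) + c.toFun (Y u) := by
        rw [hconjEnd, ← hwu, map_add, hYw, map_add, map_smulₛₗ, hcw]
        congr 2
        exact map_intCast (starRingEnd ℂ) (q + p)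
      rw [hβdef]
      simp only [LinearMap.sub_apply, hYv, hstep, map_sub, map_smulₛₗ,
        map_intCast (starRingEnd ℂ) (q + p)]
      have hpq : ((p + q : ℤ) : ℂ) = ((q + p : ℤ) : ℂ) := by norm_cast; ring
      rw [hpq]
      module
    rw [key]
    exact hcL _ hx
  -- Step 1 : finiteness of the set of nonzero pieces
  have hS : {i : ℤ × ℤ | A i ≠ ⊥}.Finite :=
    WellFoundedGT.finite_ne_bot_of_iSupIndep hint.submodule_iSupIndep
  set S : Finset (ℤ × ℤ) := hS.toFinset with hSdef
  set T : Finset (ℤ × ℤ) :=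
    ((S ×ˢ S).image fun x => x.2 - x.1).filter (fun rs => rs.1 < 0 ∧ rs.2 < 0) with hT
  -- Step 2 : the bigraded components of β
  set B : ℤ × ℤ → Module.End ℂ V := fun rs =>
    (DirectSum.toModule ℂ (ℤ × ℤ) V fun i =>
      MHSAux.proj hint (i + rs) ∘ₗ β ∘ₗ (A i).subtype) ∘ₗ
    ((MHSAux.equivOf hint).symm : V →ₗ[ℂ] ⨁ i, A i) with hB
  have hBapp : ∀ (rs j : ℤ × ℤ) (v : V) (hv : v ∈ A j),
      B rs v = MHSAux.proj hint (j + rs) (β v) := by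
    intro rs j v hv
    rw [hB]
    show (DirectSum.toModule ℂ (ℤ × ℤ) V fun i =>
      MHSAux.proj hint (i + rs) ∘ₗ β ∘ₗ (A i).subtype) ((MHSAux.equivOf hint).symm v) = _
    rw [MHSAux.symm_of_mem hint hv, ← DirectSum.lof_eq_of ℂ, DirectSum.toModule_lof]
    rfl
  have hBmem : ∀ rs : ℤ × ℤ, B rs ∈ glrs I rs.1 rs.2 := by
    intro rs
    intro p' q' v hv
    have h1 := hBapp rs (p', q') v hv
    rw [h1]
    exact MHSAux.proj_mem hint ((p', q') + rs) (β v)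
  -- Step 3 : β is the sum of its components over T
  have hsum : (∑ rs ∈ T, B rs) = β := by
    apply LinearMap.ext
    intro v
    have hv : v ∈ ⨆ i, A i := by
      rw [hint.submodule_iSup_eq_top]; trivial
    refine Submodule.iSup_induction (motive := fun v => (∑ rs ∈ T, B rs) v = β v) _ hv
      (fun j v hv => ?_)
      (by show (∑ rs ∈ T, B rs) 0 = β 0; rw [map_zero, map_zero])
      (fun y z hy hz => by
        have hy' : (∑ rs ∈ T, B rs) y = β y := hy
        have hz' : (∑ rs ∈ T, B rs) z = β z := hz
        show (∑ rs ∈ T, B rs) (y + z) = β (y + z)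
        rw [map_add, map_add, hy', hz'])
    show (∑ rs ∈ T, B rs) v = β v
    rw [LinearMap.sum_apply]
    have h1 : ∀ rs ∈ T, B rs v = MHSAux.proj hint (j + rs) (β v) :=
      fun rs _ => hBapp rs j v hv
    rw [Finset.sum_congr rfl h1]
    by_cases hw0 : β v = 0
    · simp [hw0]
    · set U : Finset (ℤ × ℤ) := T.image (fun rs => j + rs) with hU
      have hvne : v ≠ 0 := by
        intro h0
        exact hw0 (by rw [h0, map_zero])
      have hjS : j ∈ S := by
        rw [hSdef, Set.Finite.mem_toFinset]
        intro hbot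
        rw [hbot] at hv
        exact hvne hv
      have hsupp : ∀ i, ((MHSAux.equivOf hint).symm (β v)) i ≠ 0 → i ∈ U := by
        intro i hne
        have hlt : i.1 < j.1 ∧ i.2 < j.2 := by
          by_contra hc
          exact hne (((MHSAux.mem_biSup_iff hint _ (β v)).mp (lower j v hv)) i hc)
        have hiS : i ∈ S := by
          rw [hSdef, Set.Finite.mem_toFinset]
          refine (Submodule.ne_bot_iff _).mpr
            ⟨((((MHSAux.equivOf hint).symm (β v)) i : A i) : V),
              (((MHSAux.equivOf hint).symm (β v)) i).2, ?_⟩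
          intro h0
          exact hne (Subtype.ext h0)
        have hiT : i - j ∈ T := by
          rw [hT, Finset.mem_filter]
          constructor
          · exact Finset.mem_image.mpr ⟨(j, i), Finset.mem_product.mpr ⟨hjS, hiS⟩, rfl⟩
          · constructor
            · exact sub_neg.mpr hlt.1
            · exact sub_neg.mpr hlt.2
        exact Finset.mem_image.mpr ⟨i - j, hiT, by abel⟩
      have hinj : ∀ x ∈ T, ∀ y ∈ T, j + x = j + y → x = y :=
        fun x _ y _ hxy => add_left_cancel hxy
      have himg : (∑ rs ∈ T, (MHSAux.proj hint (j + rs)) (β v))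
          = ∑ i ∈ T.image (fun rs => j + rs), (MHSAux.proj hint i) (β v) :=
        (Finset.sum_image (f := fun i => (MHSAux.proj hint i) (β v)) hinj).symm
      rw [himg]
      exact MHSAux.sum_proj hint (β v) _ hsupp
  -- Conclusion
  rw [← hsum]
  refine Submodule.sum_mem _ fun rs hrs => ?_
  have hcond : rs.1 < 0 ∧ rs.2 < 0 := (Finset.mem_filter.mp hrs).2
  exact Submodule.mem_iSup_of_mem rs (Submodule.mem_iSup_of_mem hcond (hBmem rs))
end
end

section
/- Let (F,W) be a mixed Hodge structure on V whose weight filtration satisfies W_k = V and W_{k−2} = 0 for some integer k (i.e., only the graded pieces of weights k and k−1 are nonzero). Then (F,W) is split over ℝ, i.e., its Deligne bigrading satisfies conj(I^{p,q}) = I^{q,p} for all p, q. -/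
open Complex

noncomputable section

namespace Conjugation

variable {V : Type*} [AddCommGroup V] [Module ℂ V]

lemma submap_mono (c : Conjugation V) {S T : Submodule ℂ V} (h : S ≤ T) :
    c.submap S ≤ c.submap T := by
  rintro _ ⟨x, hx, rfl⟩
  exact ⟨x, h hx, rfl⟩

lemma submap_submap (c : Conjugation V) (S : Submodule ℂ V) :
    c.submap (c.submap S) = S := by
  ext v
  constructor
  · rintro ⟨_, ⟨x, hx, rfl⟩, rfl⟩
    rw [c.invol]
    exact hx
  · intro hv
    exact ⟨c.toFun v, ⟨v, hv, rfl⟩, c.invol v⟩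

end Conjugation

/-- A mixed Hodge structure whose weight filtration has only two (adjacent)
nontrivial graded pieces is split over `ℝ`. -/
theorem short_weight_filtration_split
    {V : Type*} [AddCommGroup V] [Module ℂ V] [FiniteDimensional ℂ V]
    (c : Conjugation V) (F W : ℤ → Submodule ℂ V) (h : IsMHS c F W)
    (I : ℤ → ℤ → Submodule ℂ V) (hI : IsDeligneBigrading c F W I)
    (k : ℤ) (htop : W k = ⊤) (hbot : W (k - 2) = ⊥) :
    ∀ p q : ℤ, c.submap (I p q) = I q p := by
  -- Low pieces vanish
  have hlow : ∀ p q : ℤ, p + q ≤ k - 2 → I p q = ⊥ := by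
    intro p q hpq
    have h1 : I p q ≤ W (k - 2) := by
      rw [hI.hW]
      exact le_iSup_of_le (p, q) (le_iSup_of_le hpq le_rfl)
    rw [hbot] at h1
    exact le_bot_iff.mp h1
  -- High pieces vanish
  have hhigh : ∀ p q : ℤ, k < p + q → I p q = ⊥ := by
    intro p q hpq
    have hind := hI.internal.submodule_iSupIndep (p, q)
    have h1 : (⨆ pq' : ℤ × ℤ, ⨆ _ : pq' ≠ (p, q), I pq'.1 pq'.2) = ⊤ := by
      rw [eq_top_iff, ← htop, hI.hW]
      refine iSup_le fun pq' => iSup_le fun hle => ?_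
      refine le_iSup_of_le pq' (le_iSup_of_le ?_ le_rfl)
      rintro rfl
      omega
    rw [h1] at hind
    exact disjoint_top.mp hind
  -- The key inclusion
  have hsub : ∀ p q : ℤ, c.submap (I p q) ≤ I q p := by
    intro p q
    rcases le_or_gt (p + q) k with hk | hk
    · rintro _ ⟨v, hv, rfl⟩
      have h2 := hI.conj_cond p q v hv
      have hE : (⨆ pq : ℤ × ℤ, ⨆ _ : pq.1 < q ∧ pq.2 < p, I pq.1 pq.2) = ⊥ := by
        rw [eq_bot_iff]
        refine iSup_le fun pq' => iSup_le fun h' => ?_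
        rw [hlow pq'.1 pq'.2 (by omega)]
      rwa [hE, sup_bot_eq] at h2
    · rw [hhigh p q hk]
      rintro _ ⟨v, hv, rfl⟩
      simp only [Submodule.bot_coe, Set.mem_singleton_iff] at hv
      subst hv
      rw [map_zero]
      exact (I q p).zero_mem
  intro p q
  refine le_antisymm (hsub p q) ?_
  have h3 := c.submap_mono (hsub q p)
  rwa [c.submap_submap] at h3
end
end

section
/- Let (F,W) be a mixed Hodge structure on V whose Deligne bigrading satisfies I^{p,q} = 0 unless p+q = 2k−1 or (p,q) = (k,k) or (p,q) = (k−1,k−1), for some fixed integer k. Then Λ_{(F,W)} = {α ∈ End(V) : α(W_j) ⊆ W_{j−2} for all j}. -/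
open Complex

noncomputable section

/-- The subspace `Lie_{-2}(W) = {α ∈ End(V) : α(W_j) ⊆ W_{j-2} for all j}`. -/
def LieMinusTwo {V : Type*} [AddCommGroup V] [Module ℂ V]
    (W : ℤ → Submodule ℂ V) : Submodule ℂ (Module.End ℂ V) where
  carrier := {α | ∀ j : ℤ, ∀ v ∈ W j, α v ∈ W (j - 2)}
  add_mem' := by
    intro α β hα hβ j v hv
    simpa [LinearMap.add_apply] using Submodule.add_mem _ (hα j v hv) (hβ j v hv)
  zero_mem' := by
    intro j v hv
    simp
  smul_mem' := by
    intro t α hα j v hv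
    simpa [LinearMap.smul_apply] using Submodule.smul_mem _ t (hα j v hv)

/-- For a mixed Hodge structure of type (II) (nonzero `I^{p,q}` only for
`p+q = 2k-1`, `(k,k)` and `(k-1,k-1)`), one has
`Λ_{(F,W)} = {α : α(W_j) ⊆ W_{j-2} for all j}`. -/
theorem typeII_Lambda_eq_LieMinusTwo
    {V : Type*} [AddCommGroup V] [Module ℂ V] [FiniteDimensional ℂ V]
    (c : Conjugation V) (F W : ℤ → Submodule ℂ V) (h : IsMHS c F W)
    (I : ℤ → ℤ → Submodule ℂ V) (hI : IsDeligneBigrading c F W I)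
    (k : ℤ)
    (hvan : ∀ p q : ℤ,
      ¬(p + q = 2 * k - 1 ∨ (p = k ∧ q = k) ∨ (p = k - 1 ∧ q = k - 1)) → I p q = ⊥) :
    Lambda I = LieMinusTwo W := by
  apply le_antisymm
  · -- Λ ≤ Lie₋₂
    refine iSup_le fun rs => iSup_le fun hrs => ?_
    intro α hα
    intro j v hv
    rw [hI.hW j] at hv
    have hle : (⨆ pq : ℤ × ℤ, ⨆ _ : pq.1 + pq.2 ≤ j, I pq.1 pq.2)
        ≤ (W (j - 2)).comap α := by
      refine iSup_le fun pq => iSup_le fun hpq => ?_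
      intro x hx
      have h1 : α x ∈ I (pq.1 + rs.1) (pq.2 + rs.2) := hα pq.1 pq.2 x hx
      have h2 : α x ∈ W (pq.1 + rs.1 + (pq.2 + rs.2)) := by
        rw [hI.hW]
        exact Submodule.mem_iSup_of_mem (pq.1 + rs.1, pq.2 + rs.2)
          (Submodule.mem_iSup_of_mem le_rfl h1)
      exact h.monotone_W (by omega) h2
    exact hle hv
  · -- Lie₋₂ ≤ Λ : show α ∈ gl^{-1,-1}
    intro α hα
    have hbot : ∀ j : ℤ, j ≤ 2 * k - 3 → W j = ⊥ := by
      intro j hj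
      rw [hI.hW j]
      refine le_bot_iff.mp (iSup_le fun pq => iSup_le fun hpq => ?_)
      rw [hvan pq.1 pq.2 (by omega)]
    have hW2 : W (2 * k - 2) ≤ I (k - 1) (k - 1) := by
      rw [hI.hW]
      refine iSup_le fun pq => iSup_le fun hpq => ?_
      by_cases hc : pq.1 = k - 1 ∧ pq.2 = k - 1
      · rw [hc.1, hc.2]
      · rw [hvan pq.1 pq.2 (by omega)]
        exact bot_le
    have hmem : α ∈ glrs I (-1) (-1) := by
      intro p q v hv
      by_cases hc : p + q = 2 * k - 1 ∨ (p = k ∧ q = k) ∨ (p = k - 1 ∧ q = k - 1)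
      · have hvW : v ∈ W (p + q) := by
          rw [hI.hW]
          exact Submodule.mem_iSup_of_mem (p, q) (Submodule.mem_iSup_of_mem le_rfl hv)
        have haW : α v ∈ W (p + q - 2) := hα (p + q) v hvW
        rcases hc with hc | hc | hc
        · rw [hbot (p + q - 2) (by omega)] at haW
          simp only [Submodule.mem_bot] at haW
          rw [haW]; exact Submodule.zero_mem _
        · have hIv : α v ∈ I (k - 1) (k - 1) := hW2 (h.monotone_W (by omega) haW)
          have e1 : p + -1 = k - 1 := by omega
          have e2 : q + -1 = k - 1 := by omega
          rw [e1, e2]; exact hIv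
        · obtain ⟨hp, hq⟩ := hc
          rw [hbot (p + q - 2) (by omega)] at haW
          simp only [Submodule.mem_bot] at haW
          rw [haW]; exact Submodule.zero_mem _
      · rw [hvan p q hc] at hv
        simp only [Submodule.mem_bot] at hv
        rw [hv]
        simp
    exact Submodule.mem_iSup_of_mem ((-1 : ℤ), (-1 : ℤ))
      (Submodule.mem_iSup_of_mem ⟨by norm_num, by norm_num⟩ hmem)
end
end

section
/- Let W = (W_j)_{j∈ℤ} be a finite increasing filtration of V by real subspaces with W_m = V and W_{m−3} = 0 for some integer m. Suppose g ∈ GL(V) satisfies g(W_j) = W_j for all j, and for every j the automorphism induced by g on the quotient W_j/W_{j−2} commutes with the conjugation induced on W_j/W_{j−2}. Then g factors as g = r·u, where r ∈ GL(V) commutes with conjugation and satisfies r(W_j) = W_j for all j, and u ∈ GL(V) satisfies (u − 1)(W_j) ⊆ W_{j−2} for all j. -/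
open Complex

noncomputable section

/-- **Factorization.** If `g ∈ GL(V)` preserves a real filtration `W` of length three
and induces, on every quotient `W_j/W_{j-2}`, an automorphism commuting with the
induced conjugation, then `g = r·u` with `r` real preserving `W` and
`(u - 1)(W_j) ⊆ W_{j-2}`. -/
theorem factor_real_unipotent
    {V : Type*} [AddCommGroup V] [Module ℂ V] [FiniteDimensional ℂ V]
    (c : Conjugation V) (W : ℤ → Submodule ℂ V) (hmono : Monotone W)
    (hreal : ∀ j, ∀ v ∈ W j, c.toFun v ∈ W j)
    (m : ℤ) (htop : W m = ⊤) (hbot : W (m - 3) = ⊥)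
    (g : V ≃ₗ[ℂ] V) (hgW : ∀ j, (W j).map (g : V →ₗ[ℂ] V) = W j)
    (hcomm : ∀ j, ∀ v ∈ W j, g (c.toFun v) - c.toFun (g v) ∈ W (j - 2)) :
    ∃ r u : V ≃ₗ[ℂ] V,
      (∀ v, g v = r (u v)) ∧
      (∀ v, r (c.toFun v) = c.toFun (r v)) ∧
      (∀ j, (W j).map (r : V →ₗ[ℂ] V) = W j) ∧
      (∀ j, ∀ v ∈ W j, u v - v ∈ W (j - 2)) := by
  classical
  -- h = c ∘ g ∘ c, a ℂ-linear map
  set h : V →ₗ[ℂ] V :=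
    { toFun := fun v => c.toFun (g (c.toFun v))
      map_add' := by intro x y; simp
      map_smul' := by
        intro a v
        simp [map_smulₛₗ, starRingEnd_self_apply] } with hh
  have happ : ∀ v, h v = c.toFun (g (c.toFun v)) := fun v => rfl
  -- N = g⁻¹ ∘ (h - g)
  set N : V →ₗ[ℂ] V := (g.symm.toLinearMap).comp (h - g.toLinearMap) with hNdef
  have hNapp : ∀ v, N v = g.symm (h v - g v) := fun v => rfl
  have hgmem : ∀ j, ∀ v ∈ W j, g v ∈ W j := by
    intro j v hv
    rw [← hgW j]
    exact Submodule.mem_map_of_mem hv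
  have hN : ∀ j, ∀ v ∈ W j, N v ∈ W (j - 2) := by
    intro j v hv
    have hcv : c.toFun v ∈ W j := hreal j v hv
    have h1 := hcomm j (c.toFun v) hcv
    rw [c.invol] at h1
    have h2 : h v - g v ∈ W (j - 2) := by
      have := (W (j - 2)).neg_mem h1
      simpa [happ] using this
    rw [← hgW (j - 2)] at h2
    obtain ⟨x, hx, hxe⟩ := h2
    rw [hNapp, ← hxe]
    simpa using hx
  have hN2 : ∀ v, N (N v) = 0 := by
    intro v
    have hv : v ∈ W m := by rw [htop]; trivial
    have h1 : N v ∈ W (m - 2) := hN m v hv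
    have h2 : N (N v) ∈ W (m - 2 - 2) := hN (m - 2) _ h1
    have hle : W (m - 2 - 2) ≤ W (m - 3) := hmono (by linarith)
    have := hle h2
    rw [hbot] at this
    simpa using this
  set A : V →ₗ[ℂ] V := LinearMap.id + (2⁻¹ : ℂ) • N with hA
  set B : V →ₗ[ℂ] V := LinearMap.id - (2⁻¹ : ℂ) • N with hB
  have hAapp : ∀ v, A v = v + (2⁻¹ : ℂ) • N v := by
    intro v; simp [hA]
  have hBapp : ∀ v, B v = v - (2⁻¹ : ℂ) • N v := by
    intro v; simp [hB]
  have hNA : ∀ v, N (A v) = N v := by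
    intro v; simp [hAapp, map_add, map_smul, hN2]
  have hNB : ∀ v, N (B v) = N v := by
    intro v; simp [hBapp, map_sub, map_smul, hN2]
  have hABv : ∀ v, A (B v) = v := by
    intro v
    rw [hAapp, hNB, hBapp, sub_add_cancel]
  have hBAv : ∀ v, B (A v) = v := by
    intro v
    rw [hBapp, hNA, hAapp, add_sub_cancel_right]
  have hAB : A.comp B = LinearMap.id := by ext v; simpa using hABv v
  have hBA : B.comp A = LinearMap.id := by ext v; simpa using hBAv v
  set uE : V ≃ₗ[ℂ] V := LinearEquiv.ofLinear B A hBA hAB with huE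
  set AE : V ≃ₗ[ℂ] V := LinearEquiv.ofLinear A B hAB hBA with hAE
  set rE : V ≃ₗ[ℂ] V := AE.trans g with hrE
  have hrapp : ∀ v, rE v = g (A v) := fun v => rfl
  have huapp : ∀ v, uE v = B v := fun v => rfl
  -- r v = g v + 2⁻¹ • (h v - g v)
  have hrformula : ∀ v, rE v = g v + (2⁻¹ : ℂ) • (h v - g v) := by
    intro v
    rw [hrapp, hAapp, map_add, map_smul, hNapp, g.apply_symm_apply]
  refine ⟨rE, uE, ?_, ?_, ?_, ?_⟩
  · intro v
    rw [huapp, hrapp, hABv]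
  · intro v
    have hconjhalf : (starRingEnd ℂ) (2⁻¹ : ℂ) = (2⁻¹ : ℂ) := by
      simp [Complex.ext_iff]
    rw [hrformula, hrformula]
    rw [map_add (c.toFun), map_smulₛₗ, map_sub (c.toFun), hconjhalf]
    rw [happ, happ, c.invol, c.invol]
    match_scalars <;> simp <;> norm_num
  · intro j
    have hle : Submodule.map (rE : V →ₗ[ℂ] V) (W j) ≤ W j := by
      rintro _ ⟨v, hv, rfl⟩
      have hAv : A v ∈ W j := by
        rw [hAapp]
        exact (W j).add_mem hv ((W j).smul_mem _ (hmono (by linarith) (hN j v hv)))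
      simp only [LinearEquiv.coe_coe, hrapp v]
      exact hgmem j (A v) hAv
    have hfr : Module.finrank ℂ (Submodule.map (rE : V →ₗ[ℂ] V) (W j))
        = Module.finrank ℂ (W j) := LinearEquiv.finrank_map_eq rE (W j)
    exact Submodule.eq_of_le_of_finrank_le hle (le_of_eq hfr.symm)
  · intro j v hv
    rw [huapp, hBapp]
    have : v - (2⁻¹ : ℂ) • N v - v = -((2⁻¹ : ℂ) • N v) := by abel
    rw [this]
    exact (W (j - 2)).neg_mem ((W (j - 2)).smul_mem _ (hN j v hv))
end
end

section
/- Let (F,W) be a mixed Hodge structure on V and let N ∈ End(V) be real (commuting with conjugation) with N(W_k) ⊆ W_k for all k and N(F^p) ⊆ F^{p−1} for all p. Write N = Σ_{r,s} N^{r,s} for the decomposition of N with respect to the bigrading gl^{r,s}_{(F,W)} of End(V). Then N^{r,s} = 0 whenever r ≥ 1 and (r,s) ≠ (1,−1); consequently N = N^{1,−1} + N^{0,0} + N^{−1,1} + Σ_{k>0} N^{−1,1−k} + Σ_{k>0} N^{0,−k}. -/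
open Complex

noncomputable section

/-- **Hodge components of a horizontal real endomorphism** (Lemma 6.31):
if `N` is real, preserves `W` and shifts `F` by `-1`, then in the decomposition
`N = Σ N^{r,s}` the components with `r ≥ 1`, `(r,s) ≠ (1,-1)` vanish, and
consequently `N = N^{1,-1} + N^{0,0} + N^{-1,1} + Σ_{k>0} N^{-1,1-k} + Σ_{k>0} N^{0,-k}`. -/
theorem horizontal_real_endomorphism_components
    {V : Type*} [AddCommGroup V] [Module ℂ V] [FiniteDimensional ℂ V]
    (c : Conjugation V) (F W : ℤ → Submodule ℂ V) (h : IsMHS c F W)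
    (I : ℤ → ℤ → Submodule ℂ V) (hI : IsDeligneBigrading c F W I)
    (N : Module.End ℂ V)
    (hNreal : ∀ v, N (c.toFun v) = c.toFun (N v))
    (hNW : ∀ k : ℤ, ∀ v ∈ W k, N v ∈ W k)
    (hNF : ∀ p : ℤ, ∀ v ∈ F p, N v ∈ F (p - 1))
    (Ncomp : ℤ × ℤ → Module.End ℂ V) (S : Finset (ℤ × ℤ))
    (hmem : ∀ rs : ℤ × ℤ, Ncomp rs ∈ glrs I rs.1 rs.2)
    (hsupp : ∀ rs ∉ S, Ncomp rs = 0)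
    (hsum : N = ∑ rs ∈ S, Ncomp rs) :
    (∀ r s : ℤ, 1 ≤ r → (r, s) ≠ (1, -1) → Ncomp (r, s) = 0) ∧
    N = Ncomp (1, -1) + Ncomp (0, 0) + Ncomp (-1, 1)
        + (∑ rs ∈ S.filter (fun rs => rs.1 = -1 ∧ rs.2 < 1), Ncomp rs)
        + (∑ rs ∈ S.filter (fun rs => rs.1 = 0 ∧ rs.2 < 0), Ncomp rs) := by
  classical
  have hmem' : ∀ (rs : ℤ × ℤ) (p q : ℤ) (v : V), v ∈ I p q →
      Ncomp rs v ∈ I (p + rs.1) (q + rs.2) := fun rs p q v hv => hmem rs p q v hv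
  have hint : DirectSum.IsInternal (fun pq : ℤ × ℤ => I pq.1 pq.2) := hI.internal
  set A : ℤ × ℤ → Submodule ℂ V := fun pq => I pq.1 pq.2 with hA
  set e : (DirectSum (ℤ × ℤ) fun pq => A pq) ≃ₗ[ℂ] V :=
    LinearEquiv.ofBijective (DirectSum.coeLinearMap A) hint with he
  set proj : ℤ × ℤ → (V →ₗ[ℂ] V) := fun j =>
    (A j).subtype ∘ₗ (DirectSum.component ℂ (ℤ × ℤ) (fun pq => A pq) j) ∘ₗ
      e.symm.toLinearMap with hproj
  have proj_mem : ∀ (i j : ℤ × ℤ) (v : V), v ∈ A i →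
      proj j v = if i = j then v else 0 := by
    intro i j v hv
    have h1 : e.symm v = DirectSum.of (fun pq => A pq) i ⟨v, hv⟩ := by
      rw [LinearEquiv.symm_apply_eq]
      exact (DirectSum.coeLinearMap_of A i ⟨v, hv⟩).symm
    rw [hproj]
    simp only [LinearMap.comp_apply, LinearEquiv.coe_coe, h1]
    rw [← DirectSum.lof_eq_of ℂ, DirectSum.component.of]
    by_cases hij : i = j
    · subst hij; simp
    · simp [hij]
  have proj_sup : ∀ (Pr : ℤ × ℤ → Prop) (j : ℤ × ℤ), ¬ Pr j →
      ∀ v ∈ (⨆ pq : ℤ × ℤ, ⨆ _ : Pr pq, I pq.1 pq.2), proj j v = 0 := by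
    intro Pr j hj v hv
    refine Submodule.iSup_induction (motive := fun u => proj j u = 0) _ hv ?_ (map_zero _) ?_
    · intro pq x hx
      by_cases hp : Pr pq
      · rw [iSup_pos hp] at hx
        rw [proj_mem pq j x hx, if_neg (show pq ≠ j by rintro rfl; exact hj hp)]
      · rw [iSup_neg hp] at hx
        rw [(Submodule.mem_bot ℂ).mp hx, map_zero]
    · intro x y hx hy; show proj j (x + y) = 0; rw [map_add, hx, hy, add_zero]
  have ext_zero : ∀ α : Module.End ℂ V,
      (∀ (p q : ℤ), ∀ v ∈ I p q, α v = 0) → α = 0 := by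
    intro α hα
    ext v
    have hv : v ∈ ⨆ pq : ℤ × ℤ, A pq := by
      rw [hint.submodule_iSup_eq_top]; trivial
    simp only [LinearMap.zero_apply]
    exact Submodule.iSup_induction (motive := fun u => α u = 0) _ hv
      (fun i x hx => hα i.1 i.2 x hx) (map_zero α)
      (fun x y hx hy => by show α (x + y) = 0; rw [map_add, hx, hy, add_zero])
  have mem_W : ∀ (p q k : ℤ) (v : V), v ∈ I p q → p + q ≤ k → v ∈ W k := by
    intro p q k v hv hpq
    rw [hI.hW]
    exact Submodule.mem_iSup_of_mem (p, q) (Submodule.mem_iSup_of_mem hpq hv)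
  have mem_F : ∀ (p q p' : ℤ) (v : V), v ∈ I p q → p' ≤ p → v ∈ F p' := by
    intro p q p' v hv hp
    rw [hI.hF]
    exact Submodule.mem_iSup_of_mem (p, q) (Submodule.mem_iSup_of_mem hp hv)
  have key_apply : ∀ (p q : ℤ) (v : V), v ∈ I p q → ∀ r s : ℤ,
      proj (p + r, q + s) (N v) = Ncomp (r, s) v := by
    intro p q v hv r s
    rw [hsum, LinearMap.sum_apply, map_sum]
    have hterm : ∀ rs ∈ S, proj (p + r, q + s) (Ncomp rs v)
        = if rs = (r, s) then Ncomp rs v else 0 := by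
      intro rs _
      rw [proj_mem (p + rs.1, q + rs.2) _ _ (hmem' rs p q v hv)]
      by_cases hrs : rs = (r, s)
      · subst hrs; rw [if_pos rfl, if_pos rfl]
      · rw [if_neg, if_neg hrs]
        intro hcontra
        apply hrs
        obtain ⟨r', s'⟩ := rs
        rw [Prod.mk.injEq] at hcontra ⊢
        constructor <;> omega
    rw [Finset.sum_congr rfl hterm, Finset.sum_ite_eq' S (r, s)]
    by_cases hS : (r, s) ∈ S
    · rw [if_pos hS]
    · rw [if_neg hS, hsupp _ hS]; simp
  have stepA : ∀ r s : ℤ, 0 < r + s → Ncomp (r, s) = 0 := by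
    intro r s hrs
    apply ext_zero
    intro p q v hv
    rw [← key_apply p q v hv r s]
    have hNv : N v ∈ W (p + q) := hNW _ v (mem_W p q _ v hv le_rfl)
    rw [hI.hW] at hNv
    exact proj_sup _ _ (show ¬((p + r) + (q + s) ≤ p + q) by omega) _ hNv
  have stepB : ∀ r s : ℤ, r ≤ -2 → Ncomp (r, s) = 0 := by
    intro r s hr
    apply ext_zero
    intro p q v hv
    rw [← key_apply p q v hv r s]
    have hNv : N v ∈ F (p - 1) := hNF _ v (mem_F p q _ v hv le_rfl)
    rw [hI.hF] at hNv
    exact proj_sup _ _ (show ¬(p - 1 ≤ p + r) by omega) _ hNv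
  have conj_pz : ∀ (a b : ℤ) (x : V), x ∈ I a b → ∀ i j : ℤ,
      ((i, j) : ℤ × ℤ) ≠ (b, a) → ¬(i < b ∧ j < a) →
      proj (i, j) (c.toFun x) = 0 := by
    intro a b x hx i j hne hnlt
    obtain ⟨y, hy, z, hz, hyz⟩ := Submodule.mem_sup.mp (hI.conj_cond a b x hx)
    rw [← hyz, map_add, proj_mem (b, a) _ _ hy, if_neg (fun hh => hne hh.symm), zero_add]
    exact proj_sup _ _ hnlt z hz
  have conj_inj : ∀ (a b : ℤ) (x : V), x ∈ I a b →
      proj (b, a) (c.toFun x) = 0 → x = 0 := by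
    intro a b x hx hpz
    obtain ⟨y, hy, z, hz, hyz⟩ := Submodule.mem_sup.mp (hI.conj_cond a b x hx)
    have hz0 : proj (b, a) z = 0 :=
      proj_sup _ _ (fun hh => lt_irrefl _ hh.1) z hz
    have hy0 : y = 0 := by
      rw [← hyz, map_add, proj_mem (b, a) _ _ hy, if_pos rfl, hz0, add_zero] at hpz
      exact hpz
    have hcx : c.toFun x = z := by rw [← hyz, hy0, zero_add]
    have hx2 : x = c.toFun z := by rw [← hcx, c.invol]
    have hproj0 : proj (a, b) x = 0 := by
      rw [hx2]
      refine Submodule.iSup_induction (motive := fun u => proj (a, b) (c.toFun u) = 0) _ hz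
        ?_ ?_ ?_
      · intro pq u hu
        by_cases hp : pq.1 < b ∧ pq.2 < a
        · rw [iSup_pos hp] at hu
          refine conj_pz pq.1 pq.2 u hu a b ?_ ?_
          · intro hcontra
            rw [Prod.mk.injEq] at hcontra
            omega
          · rintro ⟨h1, h2⟩
            omega
        · rw [iSup_neg hp] at hu
          show proj (a, b) (c.toFun u) = 0
          rw [(Submodule.mem_bot ℂ).mp hu, map_zero, map_zero]
      · show proj (a, b) (c.toFun 0) = 0
        rw [map_zero, map_zero]
      · intro u w hu hw
        show proj (a, b) (c.toFun (u + w)) = 0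
        rw [map_add, map_add, hu, hw, add_zero]
    rw [proj_mem (a, b) (a, b) x hx, if_pos rfl] at hproj0
    exact hproj0
  have stepC : ∀ n : ℕ, ∀ r s : ℤ, 1 ≤ r → s = -2 - (n : ℤ) → Ncomp (r, s) = 0 := by
    intro n
    induction n using Nat.strong_induction_on with
    | _ n IH =>
      intro r s hr hs
      by_cases hSmem : (r, s) ∈ S
      swap
      · exact hsupp _ hSmem
      apply ext_zero
      intro p q v hv
      have hx : Ncomp (r, s) v ∈ I (p + r) (q + s) := hmem' (r, s) p q v hv
      apply conj_inj (p + r) (q + s) _ hx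
      have lhs_eq : proj (q + s, p + r) (c.toFun (N v)) =
          proj (q + s, p + r) (c.toFun (Ncomp (r, s) v)) := by
        rw [hsum, LinearMap.sum_apply, map_sum, map_sum]
        refine Finset.sum_eq_single_of_mem (r, s) hSmem ?_
        intro rs hrsS hne
        obtain ⟨r', s'⟩ := rs
        by_cases hz : Ncomp (r', s') = 0
        · rw [hz]; simp
        · refine conj_pz (p + r') (q + s') _ (hmem' (r', s') p q v hv) _ _ ?_ ?_
          · intro hcontra
            rw [Prod.mk.injEq] at hcontra
            apply hne
            rw [Prod.mk.injEq]
            constructor <;> omega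
          · rintro ⟨h1, h2⟩
            have hle : r' + s' ≤ 0 := by
              by_contra hgt
              exact hz (stepA r' s' (by omega))
            have hm : ((-2 - s').toNat : ℤ) = -2 - s' := by omega
            exact hz (IH (-2 - s').toNat (by omega) r' s' (by omega) (by omega))
      have rhs_eq : proj (q + s, p + r) (c.toFun (N v)) = 0 := by
        rw [← hNreal v]
        obtain ⟨w, hw, u, hu, hwu⟩ := Submodule.mem_sup.mp (hI.conj_cond p q v hv)
        rw [← hwu, map_add, map_add]
        have h1 : proj (q + s, p + r) (N w) = 0 := by
          rw [key_apply q p w hw s r, stepB s r (by omega)]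
          simp
        have h2 : proj (q + s, p + r) (N u) = 0 := by
          refine Submodule.iSup_induction
            (motive := fun u => proj (q + s, p + r) (N u) = 0) _ hu ?_ ?_ ?_
          · intro ab x hxab
            by_cases hp : ab.1 < q ∧ ab.2 < p
            · rw [iSup_pos hp] at hxab
              have epair : ((q + s, p + r) : ℤ × ℤ)
                  = (ab.1 + (q - ab.1 + s), ab.2 + (p - ab.2 + r)) := by
                rw [Prod.mk.injEq]; constructor <;> ring
              rw [epair, key_apply ab.1 ab.2 x hxab (q - ab.1 + s) (p - ab.2 + r)]
              rcases le_or_gt (q - ab.1 + s + (p - ab.2 + r)) 0 with hle | hgt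
              · rw [stepB _ _ (by omega)]; simp
              · rw [stepA _ _ hgt]; simp
            · rw [iSup_neg hp] at hxab
              show proj (q + s, p + r) (N x) = 0
              rw [(Submodule.mem_bot ℂ).mp hxab, map_zero, map_zero]
          · show proj (q + s, p + r) (N 0) = 0
            rw [map_zero, map_zero]
          · intro x y hx' hy'
            show proj (q + s, p + r) (N (x + y)) = 0
            rw [map_add, map_add, hx', hy', add_zero]
        rw [h1, h2, add_zero]
      rw [← lhs_eq]
      exact rhs_eq
  have part1 : ∀ r s : ℤ, 1 ≤ r → (r, s) ≠ (1, -1) → Ncomp (r, s) = 0 := by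
    intro r s hr hne
    rcases lt_or_ge 0 (r + s) with hgt | hle
    · exact stepA r s hgt
    · have hne' : ¬(r = 1 ∧ s = -1) := by
        rintro ⟨h1', h2'⟩
        exact hne (by rw [h1', h2'])
      exact stepC (-2 - s).toNat r s hr (by omega)
  refine ⟨part1, ?_⟩
  have pointwise : ∀ rs ∈ S, Ncomp rs =
      (if rs = ((1 : ℤ), (-1 : ℤ)) then Ncomp rs else 0)
      + (if rs = ((0 : ℤ), (0 : ℤ)) then Ncomp rs else 0)
      + (if rs = ((-1 : ℤ), (1 : ℤ)) then Ncomp rs else 0)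
      + (if rs.1 = -1 ∧ rs.2 < 1 then Ncomp rs else 0)
      + (if rs.1 = 0 ∧ rs.2 < 0 then Ncomp rs else 0) := by
    intro rs _
    obtain ⟨r, s⟩ := rs
    by_cases h0 : Ncomp (r, s) = 0
    · rw [h0]; simp
    · have h1 : r + s ≤ 0 := by
        by_contra hh; exact h0 (stepA r s (by omega))
      have h2 : -1 ≤ r := by
        by_contra hh; exact h0 (stepB r s (by omega))
      have h3 : ¬(1 ≤ r ∧ s ≤ -2) := by
        rintro ⟨ha, hb⟩
        exact h0 (stepC (-2 - s).toNat r s ha (by omega))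
      simp only [Prod.mk.injEq]
      split_ifs <;> first | (exfalso; omega) | simp
  have sum1 : ∀ ab : ℤ × ℤ, (∑ rs ∈ S, if rs = ab then Ncomp rs else 0) = Ncomp ab := by
    intro ab
    rw [Finset.sum_ite_eq' S ab Ncomp]
    by_cases hab : ab ∈ S
    · rw [if_pos hab]
    · rw [if_neg hab, hsupp _ hab]
  calc N = ∑ rs ∈ S, Ncomp rs := hsum
    _ = ∑ rs ∈ S, ((if rs = ((1 : ℤ), (-1 : ℤ)) then Ncomp rs else 0)
        + (if rs = ((0 : ℤ), (0 : ℤ)) then Ncomp rs else 0)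
        + (if rs = ((-1 : ℤ), (1 : ℤ)) then Ncomp rs else 0)
        + (if rs.1 = -1 ∧ rs.2 < 1 then Ncomp rs else 0)
        + (if rs.1 = 0 ∧ rs.2 < 0 then Ncomp rs else 0)) :=
      Finset.sum_congr rfl pointwise
    _ = Ncomp (1, -1) + Ncomp (0, 0) + Ncomp (-1, 1)
        + (∑ rs ∈ S.filter (fun rs => rs.1 = -1 ∧ rs.2 < 1), Ncomp rs)
        + (∑ rs ∈ S.filter (fun rs => rs.1 = 0 ∧ rs.2 < 0), Ncomp rs) := by
      rw [Finset.sum_add_distrib, Finset.sum_add_distrib, Finset.sum_add_distrib,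
        Finset.sum_add_distrib, sum1, sum1, sum1, ← Finset.sum_filter, ← Finset.sum_filter]
end
end

section
/- Suppose β : (a,∞) → End(V) is differentiable, satisfies dβ/dy = −[β(y), L(β(y))], and for each y the components of β(y) vanish except possibly in bidegrees (1,−1), (0,0), (−1,1), (0,−k) for k > 0, and (−1,1−k) for k > 0. Define X^+(y) = 2i·β^{1,−1}(y), Z(y) = 2i·β^{0,0}(y), and X^−(y) = −2i·β^{−1,1}(y). Then −2·dX^+/dy = [Z, X^+], 2·dX^−/dy = [Z, X^−], and −dZ/dy = [X^+, X^−]. -/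
set_option maxHeartbeats 1600000
set_option synthInstance.maxHeartbeats 400000

noncomputable section
open DirectSum

/-- The bidegree-`(r,s)` part `gl^{r,s}` of the endomorphisms of `V` induced by a
bigrading `I` of `V`. -/
def glrsL {V : Type*} [NormedAddCommGroup V] [NormedSpace ℂ V]
    (I : ℤ → ℤ → Submodule ℂ V) (r s : ℤ) : Submodule ℂ (V →L[ℂ] V) where
  carrier := {α | ∀ p q : ℤ, ∀ v ∈ I p q, α v ∈ I (p + r) (q + s)}
  add_mem' := by
    intro α β hα hβ p q v hv
    simpa [ContinuousLinearMap.add_apply] using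
      Submodule.add_mem _ (hα p q v hv) (hβ p q v hv)
  zero_mem' := by
    intro p q v hv
    simp
  smul_mem' := by
    intro t α hα p q v hv
    simpa [ContinuousLinearMap.smul_apply] using Submodule.smul_mem _ t (hα p q v hv)

section auxiliary

variable {V : Type*} [NormedAddCommGroup V] [NormedSpace ℂ V]

lemma glrsL_mul_mem {I : ℤ → ℤ → Submodule ℂ V} {r s r' s' : ℤ} {α γ : V →L[ℂ] V}
    (hα : α ∈ glrsL I r s) (hγ : γ ∈ glrsL I r' s') :
    α * γ ∈ glrsL I (r + r') (s + s') := by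
  intro p q v hv
  have h2 := hα (p + r') (q + s') _ (hγ p q v hv)
  have e1 : p + r' + r = p + (r + r') := by ring
  have e2 : q + s' + s = q + (s + s') := by ring
  rw [e1, e2] at h2
  simpa [ContinuousLinearMap.mul_apply] using h2

lemma glrsL_lie_mem {I : ℤ → ℤ → Submodule ℂ V} {r s r' s' : ℤ} {α γ : V →L[ℂ] V}
    (hα : α ∈ glrsL I r s) (hγ : γ ∈ glrsL I r' s') :
    ⁅α, γ⁆ ∈ glrsL I (r + r') (s + s') := by
  rw [Ring.lie_def]
  refine sub_mem (glrsL_mul_mem hα hγ) ?_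
  have := glrsL_mul_mem hγ hα
  rwa [add_comm r' r, add_comm s' s] at this

lemma sum_lof_comp {R : Type*} [Semiring R] {ι : Type*} [DecidableEq ι]
    (M : ι → Type*) [∀ i, AddCommMonoid (M i)] [∀ i, Module R (M i)]
    {κ : Type*} (T : Finset κ) (f : κ → ι) (hf : Set.InjOn f T)
    (b : ∀ k, M (f k)) (k₀ : κ) (hk₀ : k₀ ∈ T) :
    DirectSum.component R ι M (f k₀) (∑ k ∈ T, DirectSum.lof R ι M (f k) (b k)) = b k₀ := by
  rw [map_sum, Finset.sum_eq_single_of_mem k₀ hk₀]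
  · exact DirectSum.component.lof_self R (f k₀) (b k₀)
  · intro k hk hne
    rw [DirectSum.component.of]
    exact dif_neg fun h => hne (hf hk hk₀ h)

lemma glrsL_coe_injective {I : ℤ → ℤ → Submodule ℂ V}
    (hinternal : DirectSum.IsInternal (fun pq : ℤ × ℤ => I pq.1 pq.2)) :
    Function.Injective
      (DirectSum.coeLinearMap (fun rs : ℤ × ℤ => glrsL I rs.1 rs.2)) := by
  classical
  rw [injective_iff_map_eq_zero]
  intro x hx
  have hsup : (⨆ pq : ℤ × ℤ, I pq.1 pq.2) = ⊤ := hinternal.submodule_iSup_eq_top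
  have hxsum : (∑ t ∈ DFinsupp.support x,
      ((x t : V →L[ℂ] V))) = 0 := by
    have h1 : (∑ t ∈ DFinsupp.support x,
        DirectSum.of (fun rs : ℤ × ℤ => glrsL I rs.1 rs.2) t (x t)) = x :=
      DirectSum.sum_support_of x
    calc (∑ t ∈ DFinsupp.support x, ((x t : V →L[ℂ] V)))
        = DirectSum.coeLinearMap (fun rs : ℤ × ℤ => glrsL I rs.1 rs.2)
            (∑ t ∈ DFinsupp.support x,
              DirectSum.of (fun rs : ℤ × ℤ => glrsL I rs.1 rs.2) t (x t)) := by
          rw [map_sum]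
          exact Finset.sum_congr rfl fun t _ =>
            (DirectSum.coeLinearMap_of (fun rs : ℤ × ℤ => glrsL I rs.1 rs.2) t (x t)).symm
      _ = 0 := by rw [h1, hx]
  have key : ∀ v : V, ∀ t : ℤ × ℤ, (x t : V →L[ℂ] V) v = 0 := by
    intro v
    have hv : v ∈ (⨆ pq : ℤ × ℤ, I pq.1 pq.2) := hsup ▸ Submodule.mem_top
    refine Submodule.iSup_induction (motive := fun v => ∀ t : ℤ × ℤ, (x t : V →L[ℂ] V) v = 0)
      _ hv ?_ ?_ ?_
    · rintro ⟨p, q⟩ w hw t₀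
      set f : ℤ × ℤ → ℤ × ℤ := fun t => (p + t.1, q + t.2) with hf
      have hfinj : Function.Injective f := by
        rintro ⟨a, b⟩ ⟨c, d⟩ h
        simp only [hf, Prod.mk.injEq] at h ⊢
        omega
      set D : ⨁ pq : ℤ × ℤ, I pq.1 pq.2 :=
        ∑ t ∈ DFinsupp.support x, DirectSum.lof ℂ (ℤ × ℤ) (fun pq => I pq.1 pq.2) (f t)
          ⟨(x t : V →L[ℂ] V) w, (x t).2 p q w hw⟩ with hD
      have hDcoe : DirectSum.coeAddMonoidHom (fun pq : ℤ × ℤ => I pq.1 pq.2) D = 0 := by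
        rw [hD, map_sum]
        have hcongr : ∀ t ∈ DFinsupp.support x,
            DirectSum.coeAddMonoidHom (fun pq : ℤ × ℤ => I pq.1 pq.2)
              (DirectSum.lof ℂ (ℤ × ℤ) (fun pq => I pq.1 pq.2) (f t)
                ⟨(x t : V →L[ℂ] V) w, (x t).2 p q w hw⟩)
              = (x t : V →L[ℂ] V) w := by
          intro t _
          exact DirectSum.coeAddMonoidHom_of (fun pq : ℤ × ℤ => I pq.1 pq.2) (f t) _
        rw [Finset.sum_congr rfl hcongr]
        have := congrArg (fun (α : V →L[ℂ] V) => α w) hxsum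
        simpa using this
      have hD0 : D = 0 := hinternal.injective (by rw [hDcoe]; exact (map_zero _).symm)
      by_cases ht : t₀ ∈ DFinsupp.support x
      · have := sum_lof_comp (R := ℂ) (fun pq : ℤ × ℤ => I pq.1 pq.2)
          (DFinsupp.support x) f (hfinj.injOn)
          (fun t => ⟨(x t : V →L[ℂ] V) w, (x t).2 p q w hw⟩) t₀ ht
        rw [← hD, hD0, map_zero] at this
        exact congrArg Subtype.val this.symm
      · rw [DFinsupp.notMem_support_iff.mp ht]
        simp
    · intro t; simp
    · intro y z hy hz t
      rw [map_add, hy t, hz t, add_zero]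
  refine DFinsupp.ext fun t => ?_
  have h0 : (0 : ⨁ i : ℤ × ℤ, glrsL I i.1 i.2) t = 0 := rfl
  rw [h0]
  refine Subtype.ext ?_
  simp only [ZeroMemClass.coe_zero]
  exact ContinuousLinearMap.ext fun v => key v t

end auxiliary

/-- **The pure-bidegree part of the Lax equation is Nahm's equation** (Corollary 6.42):
with `X⁺ = 2i β^{1,-1}`, `Z = 2i β^{0,0}`, `X⁻ = -2i β^{-1,1}` one has
`-2 dX⁺/dy = [Z, X⁺]`, `2 dX⁻/dy = [Z, X⁻]`, `-dZ/dy = [X⁺, X⁻]`. -/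
theorem lax_equation_gives_nahm
    {V : Type*} [NormedAddCommGroup V] [NormedSpace ℂ V] [FiniteDimensional ℂ V]
    (I : ℤ → ℤ → Submodule ℂ V)
    (hinternal : DirectSum.IsInternal (fun pq : ℤ × ℤ => I pq.1 pq.2))
    (L : (V →L[ℂ] V) →ₗ[ℂ] (V →L[ℂ] V))
    (hL₁ : ∀ r s : ℤ, 0 ≤ r → s < 0 → ∀ α ∈ glrsL I r s, L α = Complex.I • α)
    (hL₂ : ∀ r s : ℤ, 0 ≤ r → 0 ≤ s → ∀ α ∈ glrsL I r s, L α = 0)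
    (hL₃ : ∀ r s : ℤ, r < 0 → ∀ α ∈ glrsL I r s, L α = -(Complex.I • α))
    (a : ℝ) (β : ℝ → (V →L[ℂ] V))
    (bc : ℤ → ℤ → ℝ → (V →L[ℂ] V)) (S : Finset (ℤ × ℤ))
    (hmem : ∀ (r s : ℤ) (y : ℝ), bc r s y ∈ glrsL I r s)
    (hallowed : ∀ r s : ℤ,
      ¬((r = 1 ∧ s = -1) ∨ (r = 0 ∧ s = 0) ∨ (r = -1 ∧ s = 1) ∨
        (r = 0 ∧ s < 0) ∨ (r = -1 ∧ s < 1)) → bc r s = 0)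
    (hsupp : ∀ rs : ℤ × ℤ, rs ∉ S → bc rs.1 rs.2 = 0)
    (hβ : ∀ y : ℝ, β y = ∑ rs ∈ S, bc rs.1 rs.2 y)
    (hode : ∀ y ∈ Set.Ioi a, HasDerivAt β (-⁅β y, L (β y)⁆) y) :
    ∀ y ∈ Set.Ioi a,
      HasDerivAt (fun t => (2 * Complex.I) • bc 1 (-1) t)
        (-(2 : ℂ)⁻¹ • ⁅(2 * Complex.I) • bc 0 0 y, (2 * Complex.I) • bc 1 (-1) y⁆) y ∧
      HasDerivAt (fun t => (-(2 * Complex.I)) • bc (-1) 1 t)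
        ((2 : ℂ)⁻¹ • ⁅(2 * Complex.I) • bc 0 0 y, (-(2 * Complex.I)) • bc (-1) 1 y⁆) y ∧
      HasDerivAt (fun t => (2 * Complex.I) • bc 0 0 t)
        (-⁅(2 * Complex.I) • bc 1 (-1) y, (-(2 * Complex.I)) • bc (-1) 1 y⁆) y := by
  classical
  letI : LieRing (V →L[ℂ] V) := LieRing.ofAssociativeRing
  have hinj := glrsL_coe_injective hinternal
  obtain ⟨g, hg⟩ := (DirectSum.coeLinearMap
      (fun rs : ℤ × ℤ => glrsL I rs.1 rs.2)).exists_leftInverse_of_injective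
      (V := ⨁ rs : ℤ × ℤ, glrsL I rs.1 rs.2) (V' := V →L[ℂ] V)
      (LinearMap.ker_eq_bot_of_injective (M := ⨁ rs : ℤ × ℤ, glrsL I rs.1 rs.2)
        (M₂ := V →L[ℂ] V) hinj)
  set π : ℤ × ℤ → ((V →L[ℂ] V) →ₗ[ℂ] (V →L[ℂ] V)) := fun t =>
    (glrsL I t.1 t.2).subtype.comp
      ((DirectSum.component ℂ (ℤ × ℤ) (fun rs => glrsL I rs.1 rs.2) t).comp g) with hπ
  have proj_single : ∀ (t u : ℤ × ℤ) (x : V →L[ℂ] V), x ∈ glrsL I u.1 u.2 →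
      π t x = if t = u then x else 0 := by
    intro t u x hx
    have hxΨ : DirectSum.coeLinearMap (fun rs : ℤ × ℤ => glrsL I rs.1 rs.2)
        (DirectSum.lof ℂ (ℤ × ℤ) (fun rs => glrsL I rs.1 rs.2) u ⟨x, hx⟩) = x :=
      DirectSum.coeLinearMap_of _ u ⟨x, hx⟩
    have hgx : g x = DirectSum.lof ℂ (ℤ × ℤ) (fun rs => glrsL I rs.1 rs.2) u ⟨x, hx⟩ := by
      conv_lhs => rw [← hxΨ]
      exact LinearMap.congr_fun hg _
    simp only [hπ, LinearMap.comp_apply, hgx]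
    rw [DirectSum.component.of]
    by_cases h : u = t
    · subst h; simp
    · rw [dif_neg h, if_neg fun hh => h hh.symm, Submodule.coe_subtype, ZeroMemClass.coe_zero]
  have proj_sum : ∀ (t : ℤ × ℤ) (f : ℤ × ℤ → (V →L[ℂ] V)),
      (∀ u ∈ S, f u ∈ glrsL I u.1 u.2) →
      π t (∑ u ∈ S, f u) = if t ∈ S then f t else 0 := by
    intro t f hf
    rw [map_sum, Finset.sum_congr rfl fun u hu => proj_single t u (f u) (hf u hu)]
    exact Finset.sum_ite_eq S t f
  have hbc : ∀ (t : ℤ × ℤ) (z : ℝ), bc t.1 t.2 z = π t (β z) := by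
    intro t z
    rw [hβ z, proj_sum t _ (fun u _ => hmem u.1 u.2 z)]
    by_cases ht : t ∈ S
    · rw [if_pos ht]
    · rw [if_neg ht, hsupp t ht]
      rfl
  set c : ℤ × ℤ → ℂ := fun v =>
    if 0 ≤ v.1 then (if v.2 < 0 then Complex.I else 0) else -Complex.I with hc
  have hLbc : ∀ (v : ℤ × ℤ) (z : ℝ), L (bc v.1 v.2 z) = c v • bc v.1 v.2 z := by
    intro v z
    rcases lt_or_ge v.1 0 with h1 | h1
    · rw [hL₃ v.1 v.2 h1 _ (hmem v.1 v.2 z), hc]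
      simp [not_le.mpr h1]
    · rcases lt_or_ge v.2 0 with h2 | h2
      · rw [hL₁ v.1 v.2 h1 h2 _ (hmem v.1 v.2 z), hc]
        simp [h1, h2]
      · rw [hL₂ v.1 v.2 h1 h2 _ (hmem v.1 v.2 z), hc]
        simp [h1, not_lt.mpr h2]
  intro y hy
  have hlie : ⁅β y, L (β y)⁆ = ∑ u ∈ S, ∑ v ∈ S, c v • ⁅bc u.1 u.2 y, bc v.1 v.2 y⁆ := by
    conv_lhs => rw [hβ y]
    rw [map_sum, Finset.sum_congr rfl fun v _ => hLbc v y]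
    have h1 : (∑ u ∈ S, bc u.1 u.2 y) * (∑ v ∈ S, c v • bc v.1 v.2 y)
        = ∑ u ∈ S, ∑ v ∈ S, bc u.1 u.2 y * (c v • bc v.1 v.2 y) :=
      Finset.sum_mul_sum _ _ _ _
    have h2 : (∑ v ∈ S, c v • bc v.1 v.2 y) * (∑ u ∈ S, bc u.1 u.2 y)
        = ∑ u ∈ S, ∑ v ∈ S, (c v • bc v.1 v.2 y) * bc u.1 u.2 y := by
      rw [Finset.sum_mul_sum]
      exact Finset.sum_comm
    rw [Ring.lie_def, h1, h2, ← Finset.sum_sub_distrib]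
    refine Finset.sum_congr rfl fun u _ => ?_
    rw [← Finset.sum_sub_distrib]
    refine Finset.sum_congr rfl fun v _ => ?_
    rw [← Ring.lie_def, lie_smul]
  have hπlie : ∀ t₀ : ℤ × ℤ, π t₀ ⁅β y, L (β y)⁆ =
      ∑ u ∈ S, ∑ v ∈ S, if t₀ = u + v then c v • ⁅bc u.1 u.2 y, bc v.1 v.2 y⁆ else 0 := by
    intro t₀
    rw [hlie, map_sum]
    refine Finset.sum_congr rfl fun u _ => ?_
    rw [map_sum]
    refine Finset.sum_congr rfl fun v _ => ?_
    refine proj_single t₀ (u + v) _ ?_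
    exact Submodule.smul_mem _ _ (glrsL_lie_mem (hmem u.1 u.2 y) (hmem v.1 v.2 y))
  have hsum_pair : ∀ (u₀ v₀ : ℤ × ℤ) (X : V →L[ℂ] V),
      (∑ u ∈ S, ∑ v ∈ S, if (u, v) = (u₀, v₀) then X else 0)
        = if u₀ ∈ S ∧ v₀ ∈ S then X else 0 := by
    intro u₀ v₀ X
    have inner : ∀ u ∈ S, (∑ v ∈ S, if (u, v) = (u₀, v₀) then X else 0)
        = if u = u₀ then (if v₀ ∈ S then X else 0) else 0 := by
      intro u _
      by_cases hu : u = u₀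
      · subst hu
        rw [if_pos rfl, ← Finset.sum_ite_eq' S v₀ fun _ => X]
        refine Finset.sum_congr rfl fun v _ => ?_
        by_cases hv : v = v₀
        · subst hv; simp
        · rw [if_neg hv, if_neg (by simp [hv])]
      · rw [if_neg hu]
        exact Finset.sum_eq_zero fun v _ => if_neg (by simp [hu])
    rw [Finset.sum_congr rfl inner, Finset.sum_ite_eq' S u₀ _]
    by_cases h1 : u₀ ∈ S <;> by_cases h2 : v₀ ∈ S <;> simp [h1, h2]
  -- derivative of each component
  have hder : ∀ t : ℤ × ℤ, HasDerivAt (fun z => bc t.1 t.2 z) (π t (-⁅β y, L (β y)⁆)) y := by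
    intro t
    have h2 := (((LinearMap.toContinuousLinearMap (π t)).restrictScalars ℝ).hasFDerivAt
      (x := β y)).comp_hasDerivAt y (hode y hy)
    have h1 : HasDerivAt (fun z => π t (β z)) (π t (-⁅β y, L (β y)⁆)) y := by
      exact h2
    exact h1.congr_of_eventuallyEq (Filter.Eventually.of_forall fun z => hbc t z)
  have hzero : ∀ t : ℤ × ℤ, t ∉ S → bc t.1 t.2 y = 0 := by
    intro t ht
    rw [hsupp t ht]
    rfl
  -- value in bidegree (1,-1)
  have hval1 : π (1, -1) ⁅β y, L (β y)⁆ = Complex.I • ⁅bc 0 0 y, bc 1 (-1) y⁆ := by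
    rw [hπlie (1, -1)]
    have hpt : ∀ u ∈ S, ∀ v ∈ S,
        (if ((1 : ℤ), (-1 : ℤ)) = u + v then c v • ⁅bc u.1 u.2 y, bc v.1 v.2 y⁆ else 0)
          = (if (u, v) = ((((0 : ℤ), (0 : ℤ)) : ℤ × ℤ), (((1 : ℤ), (-1 : ℤ)) : ℤ × ℤ)) then
              Complex.I • ⁅bc 0 0 y, bc 1 (-1) y⁆ else 0) := by
      rintro ⟨u1, u2⟩ - ⟨v1, v2⟩ -
      by_cases hAu : (u1 = 1 ∧ u2 = -1) ∨ (u1 = 0 ∧ u2 = 0) ∨ (u1 = -1 ∧ u2 = 1) ∨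
          (u1 = 0 ∧ u2 < 0) ∨ (u1 = -1 ∧ u2 < 1)
      · by_cases hAv : (v1 = 1 ∧ v2 = -1) ∨ (v1 = 0 ∧ v2 = 0) ∨ (v1 = -1 ∧ v2 = 1) ∨
            (v1 = 0 ∧ v2 < 0) ∨ (v1 = -1 ∧ v2 < 1)
        · by_cases hs : ((1 : ℤ), (-1 : ℤ)) = ((u1, u2) : ℤ × ℤ) + ((v1, v2) : ℤ × ℤ)
          · have hs' := hs
            rw [Prod.mk_add_mk, Prod.mk.injEq] at hs'
            have hcase : (u1 = 0 ∧ u2 = 0 ∧ v1 = 1 ∧ v2 = -1) ∨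
                (u1 = 1 ∧ u2 = -1 ∧ v1 = 0 ∧ v2 = 0) := by omega
            rcases hcase with ⟨h1, h2, h3, h4⟩ | ⟨h1, h2, h3, h4⟩ <;>
              subst h1 <;> subst h2 <;> subst h3 <;> subst h4
            · rw [if_pos hs, if_pos rfl]
              simp only [hc]
              norm_num
            · rw [if_pos hs, if_neg (by simp)]
              simp only [hc]
              norm_num
          · rw [if_neg hs, if_neg]
            intro h
            apply hs
            simp only [Prod.mk.injEq] at h
            obtain ⟨⟨h1, h2⟩, h3, h4⟩ := h
            subst h1; subst h2; subst h3; subst h4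
            simp
        · have hbv : bc v1 v2 = 0 := hallowed v1 v2 hAv
          have hne : ¬((((u1, u2) : ℤ × ℤ), ((v1, v2) : ℤ × ℤ))
              = (((0 : ℤ), (0 : ℤ)), ((1 : ℤ), (-1 : ℤ)))) := by
            intro h
            simp only [Prod.mk.injEq] at h
            apply hAv
            omega
          rw [if_neg hne]
          simp [hbv]
      · have hbu : bc u1 u2 = 0 := hallowed u1 u2 hAu
        have hne : ¬((((u1, u2) : ℤ × ℤ), ((v1, v2) : ℤ × ℤ))
            = (((0 : ℤ), (0 : ℤ)), ((1 : ℤ), (-1 : ℤ)))) := by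
          intro h
          simp only [Prod.mk.injEq] at h
          apply hAu
          omega
        rw [if_neg hne]
        simp [hbu]
    rw [Finset.sum_congr rfl fun u hu => Finset.sum_congr rfl fun v hv => hpt u hu v hv,
      hsum_pair]
    by_cases h0 : (((0 : ℤ), (0 : ℤ)) : ℤ × ℤ) ∈ S ∧ (((1 : ℤ), (-1 : ℤ)) : ℤ × ℤ) ∈ S
    · rw [if_pos h0]
    · rw [if_neg h0]
      rcases not_and_or.mp h0 with h | h
      · have hz : bc 0 0 y = 0 := hzero (0, 0) h
        rw [hz]
        simp
      · have hz : bc 1 (-1) y = 0 := hzero (1, -1) h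
        rw [hz]
        simp
  -- value in bidegree (-1,1)
  have hval2 : π (-1, 1) ⁅β y, L (β y)⁆ = (-Complex.I) • ⁅bc 0 0 y, bc (-1) 1 y⁆ := by
    rw [hπlie (-1, 1)]
    have hpt : ∀ u ∈ S, ∀ v ∈ S,
        (if ((-1 : ℤ), (1 : ℤ)) = u + v then c v • ⁅bc u.1 u.2 y, bc v.1 v.2 y⁆ else 0)
          = (if (u, v) = ((((0 : ℤ), (0 : ℤ)) : ℤ × ℤ), (((-1 : ℤ), (1 : ℤ)) : ℤ × ℤ)) then
              (-Complex.I) • ⁅bc 0 0 y, bc (-1) 1 y⁆ else 0) := by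
      rintro ⟨u1, u2⟩ - ⟨v1, v2⟩ -
      by_cases hAu : (u1 = 1 ∧ u2 = -1) ∨ (u1 = 0 ∧ u2 = 0) ∨ (u1 = -1 ∧ u2 = 1) ∨
          (u1 = 0 ∧ u2 < 0) ∨ (u1 = -1 ∧ u2 < 1)
      · by_cases hAv : (v1 = 1 ∧ v2 = -1) ∨ (v1 = 0 ∧ v2 = 0) ∨ (v1 = -1 ∧ v2 = 1) ∨
            (v1 = 0 ∧ v2 < 0) ∨ (v1 = -1 ∧ v2 < 1)
        · by_cases hs : ((-1 : ℤ), (1 : ℤ)) = ((u1, u2) : ℤ × ℤ) + ((v1, v2) : ℤ × ℤ)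
          · have hs' := hs
            rw [Prod.mk_add_mk, Prod.mk.injEq] at hs'
            have hcase : (u1 = 0 ∧ u2 = 0 ∧ v1 = -1 ∧ v2 = 1) ∨
                (u1 = -1 ∧ u2 = 1 ∧ v1 = 0 ∧ v2 = 0) := by omega
            rcases hcase with ⟨h1, h2, h3, h4⟩ | ⟨h1, h2, h3, h4⟩ <;>
              subst h1 <;> subst h2 <;> subst h3 <;> subst h4
            · rw [if_pos hs, if_pos rfl]
              simp only [hc]
              norm_num
            · rw [if_pos hs, if_neg (by simp)]
              simp only [hc]
              norm_num
          · rw [if_neg hs, if_neg]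
            intro h
            apply hs
            simp only [Prod.mk.injEq] at h
            obtain ⟨⟨h1, h2⟩, h3, h4⟩ := h
            subst h1; subst h2; subst h3; subst h4
            simp
        · have hbv : bc v1 v2 = 0 := hallowed v1 v2 hAv
          have hne : ¬((((u1, u2) : ℤ × ℤ), ((v1, v2) : ℤ × ℤ))
              = (((0 : ℤ), (0 : ℤ)), ((-1 : ℤ), (1 : ℤ)))) := by
            intro h
            simp only [Prod.mk.injEq] at h
            apply hAv
            omega
          rw [if_neg hne]
          simp [hbv]
      · have hbu : bc u1 u2 = 0 := hallowed u1 u2 hAu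
        have hne : ¬((((u1, u2) : ℤ × ℤ), ((v1, v2) : ℤ × ℤ))
            = (((0 : ℤ), (0 : ℤ)), ((-1 : ℤ), (1 : ℤ)))) := by
          intro h
          simp only [Prod.mk.injEq] at h
          apply hAu
          omega
        rw [if_neg hne]
        simp [hbu]
    rw [Finset.sum_congr rfl fun u hu => Finset.sum_congr rfl fun v hv => hpt u hu v hv,
      hsum_pair]
    by_cases h0 : (((0 : ℤ), (0 : ℤ)) : ℤ × ℤ) ∈ S ∧ (((-1 : ℤ), (1 : ℤ)) : ℤ × ℤ) ∈ S
    · rw [if_pos h0]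
    · rw [if_neg h0]
      rcases not_and_or.mp h0 with h | h
      · have hz : bc 0 0 y = 0 := hzero (0, 0) h
        rw [hz]
        simp
      · have hz : bc (-1) 1 y = 0 := hzero (-1, 1) h
        rw [hz]
        simp
  -- value in bidegree (0,0)
  have hval3 : π (0, 0) ⁅β y, L (β y)⁆ =
      (-Complex.I) • ⁅bc 1 (-1) y, bc (-1) 1 y⁆
        + Complex.I • ⁅bc (-1) 1 y, bc 1 (-1) y⁆ := by
    rw [hπlie (0, 0)]
    have hpt : ∀ u ∈ S, ∀ v ∈ S,
        (if ((0 : ℤ), (0 : ℤ)) = u + v then c v • ⁅bc u.1 u.2 y, bc v.1 v.2 y⁆ else 0)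
          = (if (u, v) = ((((1 : ℤ), (-1 : ℤ)) : ℤ × ℤ), (((-1 : ℤ), (1 : ℤ)) : ℤ × ℤ)) then
              (-Complex.I) • ⁅bc 1 (-1) y, bc (-1) 1 y⁆ else 0)
            + (if (u, v) = ((((-1 : ℤ), (1 : ℤ)) : ℤ × ℤ), (((1 : ℤ), (-1 : ℤ)) : ℤ × ℤ)) then
              Complex.I • ⁅bc (-1) 1 y, bc 1 (-1) y⁆ else 0) := by
      rintro ⟨u1, u2⟩ - ⟨v1, v2⟩ -
      by_cases hAu : (u1 = 1 ∧ u2 = -1) ∨ (u1 = 0 ∧ u2 = 0) ∨ (u1 = -1 ∧ u2 = 1) ∨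
          (u1 = 0 ∧ u2 < 0) ∨ (u1 = -1 ∧ u2 < 1)
      · by_cases hAv : (v1 = 1 ∧ v2 = -1) ∨ (v1 = 0 ∧ v2 = 0) ∨ (v1 = -1 ∧ v2 = 1) ∨
            (v1 = 0 ∧ v2 < 0) ∨ (v1 = -1 ∧ v2 < 1)
        · by_cases hs : ((0 : ℤ), (0 : ℤ)) = ((u1, u2) : ℤ × ℤ) + ((v1, v2) : ℤ × ℤ)
          · have hs' := hs
            rw [Prod.mk_add_mk, Prod.mk.injEq] at hs'
            have hcase : (u1 = 1 ∧ u2 = -1 ∧ v1 = -1 ∧ v2 = 1) ∨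
                (u1 = -1 ∧ u2 = 1 ∧ v1 = 1 ∧ v2 = -1) ∨
                (u1 = 0 ∧ u2 = 0 ∧ v1 = 0 ∧ v2 = 0) := by omega
            rcases hcase with ⟨h1, h2, h3, h4⟩ | ⟨h1, h2, h3, h4⟩ | ⟨h1, h2, h3, h4⟩ <;>
              subst h1 <;> subst h2 <;> subst h3 <;> subst h4
            · rw [if_pos hs, if_pos rfl, if_neg (by simp)]
              simp only [hc]
              norm_num
            · rw [if_pos hs, if_neg (by simp), if_pos rfl]
              simp only [hc]
              norm_num
            · rw [if_pos hs, if_neg (by decide), if_neg (by decide)]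
              simp only [hc]
              norm_num
          · have hne1 : ¬((((u1, u2) : ℤ × ℤ), ((v1, v2) : ℤ × ℤ))
                = ((((1 : ℤ), (-1 : ℤ)) : ℤ × ℤ), (((-1 : ℤ), (1 : ℤ)) : ℤ × ℤ))) := by
              intro h
              apply hs
              simp only [Prod.mk.injEq] at h
              obtain ⟨⟨h1, h2⟩, h3, h4⟩ := h
              subst h1; subst h2; subst h3; subst h4
              decide
            have hne2 : ¬((((u1, u2) : ℤ × ℤ), ((v1, v2) : ℤ × ℤ))
                = ((((-1 : ℤ), (1 : ℤ)) : ℤ × ℤ), (((1 : ℤ), (-1 : ℤ)) : ℤ × ℤ))) := by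
              intro h
              apply hs
              simp only [Prod.mk.injEq] at h
              obtain ⟨⟨h1, h2⟩, h3, h4⟩ := h
              subst h1; subst h2; subst h3; subst h4
              decide
            rw [if_neg hs, if_neg hne1, if_neg hne2, add_zero]
        · have hbv : bc v1 v2 = 0 := hallowed v1 v2 hAv
          have hne1 : ¬((((u1, u2) : ℤ × ℤ), ((v1, v2) : ℤ × ℤ))
              = (((1 : ℤ), (-1 : ℤ)), ((-1 : ℤ), (1 : ℤ)))) := by
            intro h
            simp only [Prod.mk.injEq] at h
            apply hAv
            omega
          have hne2 : ¬((((u1, u2) : ℤ × ℤ), ((v1, v2) : ℤ × ℤ))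
              = (((-1 : ℤ), (1 : ℤ)), ((1 : ℤ), (-1 : ℤ)))) := by
            intro h
            simp only [Prod.mk.injEq] at h
            apply hAv
            omega
          rw [if_neg hne1, if_neg hne2]
          simp [hbv]
      · have hbu : bc u1 u2 = 0 := hallowed u1 u2 hAu
        have hne1 : ¬((((u1, u2) : ℤ × ℤ), ((v1, v2) : ℤ × ℤ))
            = (((1 : ℤ), (-1 : ℤ)), ((-1 : ℤ), (1 : ℤ)))) := by
          intro h
          simp only [Prod.mk.injEq] at h
          apply hAu
          omega
        have hne2 : ¬((((u1, u2) : ℤ × ℤ), ((v1, v2) : ℤ × ℤ))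
            = (((-1 : ℤ), (1 : ℤ)), ((1 : ℤ), (-1 : ℤ)))) := by
          intro h
          simp only [Prod.mk.injEq] at h
          apply hAu
          omega
        rw [if_neg hne1, if_neg hne2]
        simp [hbu]
    rw [Finset.sum_congr rfl fun u hu => Finset.sum_congr rfl fun v hv => hpt u hu v hv]
    rw [Finset.sum_congr rfl fun u _ => Finset.sum_add_distrib, Finset.sum_add_distrib,
      hsum_pair, hsum_pair]
    have e1 : (if (((1 : ℤ), (-1 : ℤ)) : ℤ × ℤ) ∈ S ∧ (((-1 : ℤ), (1 : ℤ)) : ℤ × ℤ) ∈ S then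
        (-Complex.I) • ⁅bc 1 (-1) y, bc (-1) 1 y⁆ else 0)
          = (-Complex.I) • ⁅bc 1 (-1) y, bc (-1) 1 y⁆ := by
      by_cases h0 : (((1 : ℤ), (-1 : ℤ)) : ℤ × ℤ) ∈ S ∧ (((-1 : ℤ), (1 : ℤ)) : ℤ × ℤ) ∈ S
      · rw [if_pos h0]
      · rw [if_neg h0]
        rcases not_and_or.mp h0 with h | h
        · have hz : bc 1 (-1) y = 0 := hzero (1, -1) h
          rw [hz]
          simp
        · have hz : bc (-1) 1 y = 0 := hzero (-1, 1) h
          rw [hz]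
          simp
    have e2 : (if (((-1 : ℤ), (1 : ℤ)) : ℤ × ℤ) ∈ S ∧ (((1 : ℤ), (-1 : ℤ)) : ℤ × ℤ) ∈ S then
        Complex.I • ⁅bc (-1) 1 y, bc 1 (-1) y⁆ else 0)
          = Complex.I • ⁅bc (-1) 1 y, bc 1 (-1) y⁆ := by
      by_cases h0 : (((-1 : ℤ), (1 : ℤ)) : ℤ × ℤ) ∈ S ∧ (((1 : ℤ), (-1 : ℤ)) : ℤ × ℤ) ∈ S
      · rw [if_pos h0]
      · rw [if_neg h0]
        rcases not_and_or.mp h0 with h | h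
        · have hz : bc (-1) 1 y = 0 := hzero (-1, 1) h
          rw [hz]
          simp
        · have hz : bc 1 (-1) y = 0 := hzero (1, -1) h
          rw [hz]
          simp
    rw [e1, e2]
  -- assemble
  refine ⟨?_, ?_, ?_⟩
  · have h1 : HasDerivAt (fun z => bc 1 (-1) z) (π (1, -1) (-⁅β y, L (β y)⁆)) y := hder (1, -1)
    have h2 := h1.const_smul (2 * Complex.I)
    refine h2.congr_deriv ?_
    rw [map_neg, hval1, smul_lie, lie_smul]
    match_scalars
    ring
  · have h1 : HasDerivAt (fun z => bc (-1) 1 z) (π (-1, 1) (-⁅β y, L (β y)⁆)) y := hder (-1, 1)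
    have h2 := h1.const_smul (-(2 * Complex.I))
    refine h2.congr_deriv ?_
    rw [map_neg, hval2, smul_lie, lie_smul]
    match_scalars
    ring
  · have h1 : HasDerivAt (fun z => bc 0 0 z) (π (0, 0) (-⁅β y, L (β y)⁆)) y := hder (0, 0)
    have h2 := h1.const_smul (2 * Complex.I)
    refine h2.congr_deriv ?_
    rw [map_neg, hval3, smul_lie, lie_smul,
      ← lie_skew (bc (-1) 1 y) (bc 1 (-1) y)]
    match_scalars
    ring
end
end

section
/- Let V be a finite-dimensional complex vector space, L : End(V) → End(V) a linear map, and β : (a,∞) → End(V) a C¹ function satisfying dβ/dy = −[β(y), L(β(y))]. Let h : (a,∞) → GL(V) be a C¹ solution of dh/dy = −h(y)·L(β(y)). Then: (a) there exists a fixed Ñ ∈ End(V) such that β(y) = h(y)^{−1} ∘ Ñ ∘ h(y) for all y; (b) if moreover (F_o^p)_p is a family of complex subspaces of V such that (i·β(y) + L(β(y)))(F_o^p) ⊆ F_o^p for all y and p, then there exist complex subspaces F̃^p of V with h(y)(F_o^p) = e^{iyÑ}(F̃^p) for all y and p. -/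
noncomputable section

open Set

private lemma gron_zero {E : Type*} [NormedAddCommGroup E] [NormedSpace ℝ E]
    {F F' : ℝ → E} {c d K : ℝ}
    (hder : ∀ y ∈ Icc c d, HasDerivAt F (F' y) y)
    (hbound : ∀ y ∈ Icc c d, ‖F' y‖ ≤ K * ‖F y‖)
    (h0 : F c = 0) : ∀ y ∈ Icc c d, F y = 0 := by
  intro y hy
  have hcont : ContinuousOn F (Icc c d) := fun t ht =>
    (hder t ht).continuousAt.continuousWithinAt
  have key := norm_le_gronwallBound_of_norm_deriv_right_le (δ := 0) (ε := 0) (K := K) hcont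
    (fun x hx => (hder x (Ico_subset_Icc_self hx)).hasDerivWithinAt)
    (by simp [h0]) (fun x hx => by simpa using hbound x (Ico_subset_Icc_self hx)) y hy
  rw [gronwallBound_ε0] at key
  simpa using norm_le_zero_iff.mp (by simpa using key)

private lemma gron_zero2 {E : Type*} [NormedAddCommGroup E] [NormedSpace ℝ E]
    {F F' : ℝ → E} {a y₀ : ℝ} (hy₀ : a < y₀)
    (hder : ∀ y ∈ Ioi a, HasDerivAt F (F' y) y)
    (hbound : ∀ c d : ℝ, a < c → ∃ K, ∀ y ∈ Icc c d, ‖F' y‖ ≤ K * ‖F y‖)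
    (h0 : F y₀ = 0) : ∀ y ∈ Ioi a, F y = 0 := by
  intro y hy
  rcases le_total y₀ y with hle | hle
  · obtain ⟨K, hK⟩ := hbound y₀ y hy₀
    exact gron_zero (fun t ht => hder t (lt_of_lt_of_le hy₀ ht.1)) hK h0 y ⟨hle, le_refl y⟩
  · obtain ⟨K, hK⟩ := hbound y y₀ hy
    have hGder : ∀ s ∈ Icc y y₀, HasDerivAt (fun s => F (y + y₀ - s))
        ((fun s => -(F' (y + y₀ - s))) s) s := by
      intro s hs
      have hmem : y + y₀ - s ∈ Icc y y₀ := ⟨by linarith [hs.2], by linarith [hs.1]⟩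
      have h1 : HasDerivAt (fun s : ℝ => y + y₀ - s) (-1) s := by
        simpa using (hasDerivAt_id s).const_sub (y + y₀)
      have h2 := (hder _ (lt_of_lt_of_le hy hmem.1)).scomp s h1
      simpa [Function.comp_def] using h2
    have hGbound : ∀ s ∈ Icc y y₀,
        ‖(fun s => -(F' (y + y₀ - s))) s‖ ≤ K * ‖(fun s => F (y + y₀ - s)) s‖ := by
      intro s hs
      have hmem : y + y₀ - s ∈ Icc y y₀ := ⟨by linarith [hs.2], by linarith [hs.1]⟩
      simpa using hK _ hmem
    have hG0 : (fun s => F (y + y₀ - s)) y = 0 := by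
      show F (y + y₀ - y) = 0
      rw [show y + y₀ - y = y₀ by ring]; exact h0
    have := gron_zero hGder hGbound hG0 y₀ ⟨hle, le_refl _⟩
    rw [show y + y₀ - y₀ = y by ring] at this
    exact this

set_option maxHeartbeats 1600000 in
set_option synthInstance.maxHeartbeats 1000000 in
/-- **Inverting the Lax equation** (Theorem 7.1): if `β` satisfies
`dβ/dy = -[β, L β]` and `h` is a `GL(V)`-valued solution of `dh/dy = -h · L(β)`,
then (a) `β(y) = h(y)⁻¹ ∘ Ñ ∘ h(y)` for some fixed `Ñ`, and (b) if a family of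
subspaces `F_o^p` is stable under `i β(y) + L(β(y))` for all `y`, then there are
subspaces `F̃^p` with `h(y)(F_o^p) = e^{i y Ñ}(F̃^p)`. -/
theorem lax_solution_is_conjugate_orbit
    {V : Type*} [NormedAddCommGroup V] [NormedSpace ℂ V] [FiniteDimensional ℂ V]
    (L : (V →L[ℂ] V) →ₗ[ℂ] (V →L[ℂ] V)) (a : ℝ)
    (β : ℝ → (V →L[ℂ] V))
    (hβ : ∀ y ∈ Set.Ioi a, HasDerivAt β (-⁅β y, L (β y)⁆) y)
    (h : ℝ → (V ≃L[ℂ] V))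
    (hh : ∀ y ∈ Set.Ioi a, HasDerivAt (fun t => ((h t : V →L[ℂ] V)))
      (-((h y : V →L[ℂ] V) * L (β y))) y) :
    ∃ N : V →L[ℂ] V,
      (∀ y ∈ Set.Ioi a,
        β y = ((h y).symm : V →L[ℂ] V) * N * (h y : V →L[ℂ] V)) ∧
      ∀ Fo : ℤ → Submodule ℂ V,
        (∀ y ∈ Set.Ioi a, ∀ p : ℤ, ∀ v ∈ Fo p, (Complex.I • β y + L (β y)) v ∈ Fo p) →
        ∃ Ft : ℤ → Submodule ℂ V, ∀ y ∈ Set.Ioi a, ∀ p : ℤ,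
          (Fo p).map ((h y : V →L[ℂ] V) : V →ₗ[ℂ] V)
            = (Ft p).map ((NormedSpace.exp ((Complex.I * (y : ℂ)) • N) : V →L[ℂ] V) : V →ₗ[ℂ] V) := by
  classical
  set k : ℝ → V →L[ℂ] V := fun y => ((h y).symm : V →L[ℂ] V) with hk_def
  have hkh1 : ∀ y, k y * (h y : V →L[ℂ] V) = 1 := by
    intro y; ext v
    simp [hk_def, ContinuousLinearMap.mul_apply]
  have hhk1 : ∀ y, (h y : V →L[ℂ] V) * k y = 1 := by
    intro y; ext v
    simp [hk_def, ContinuousLinearMap.mul_apply]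
  have hk_inv : ∀ y, Ring.inverse ((h y : V →L[ℂ] V)) = k y := by
    intro y
    rw [ContinuousLinearMap.ringInverse_equiv, ContinuousLinearMap.inverse_equiv]
  -- derivative of the inverse
  have hk' : ∀ y ∈ Ioi a, HasDerivAt k (L (β y) * k y) y := by
    intro y hy
    have hu : HasFDerivAt Ring.inverse
        (-ContinuousLinearMap.mulLeftRight ℝ _ (k y) (k y)) ((h y : V →L[ℂ] V)) :=
      hasFDerivAt_ringInverse (𝕜 := ℝ)
        ⟨(h y : V →L[ℂ] V), k y, hhk1 y, hkh1 y⟩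
    have hcomp' := hu.comp_hasDerivAt y (hh y hy)
    have hcomp : HasDerivAt (fun t => Ring.inverse ((h t : V →L[ℂ] V)))
        ((-ContinuousLinearMap.mulLeftRight ℝ _ (k y) (k y)) (-((h y : V →L[ℂ] V) * L (β y)))) y :=
      hcomp'
    have hfun : (fun t => Ring.inverse ((h t : V →L[ℂ] V))) = k := funext hk_inv
    rw [hfun] at hcomp
    convert hcomp using 1
    simp only [ContinuousLinearMap.neg_apply, ContinuousLinearMap.mulLeftRight_apply,
      mul_neg, neg_neg]
    rw [← mul_assoc, hkh1 y]
    simp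
  -- the conjugated operator is constant
  set P : ℝ → V →L[ℂ] V := fun t => (h t : V →L[ℂ] V) * β t * k t with hP_def
  have hP' : ∀ y ∈ Ioi a, HasDerivAt P 0 y := by
    intro y hy
    have h1 := ((hh y hy).mul (hβ y hy)).mul (hk' y hy)
    refine h1.congr_deriv ?_
    simp only [Pi.mul_apply]
    rw [Ring.lie_def]
    noncomm_ring
  set y₀ : ℝ := a + 1 with hy₀_def
  have hy₀ : y₀ ∈ Ioi a := by simp [hy₀_def]
  have hPconst : ∀ y ∈ Ioi a, P y = P y₀ := by
    intro y hy
    have hb := Convex.norm_image_sub_le_of_norm_hasDerivWithin_le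
      (f := P) (f' := fun _ => 0) (C := 0)
      (fun t ht => (hP' t ht).hasDerivWithinAt)
      (fun t _ => by simp) (convex_Ioi a) hy₀ hy
    rw [zero_mul] at hb
    have := norm_le_zero_iff.mp hb
    exact sub_eq_zero.mp this
  set N : V →L[ℂ] V := P y₀ with hN_def
  -- part (a)
  have ha : ∀ y ∈ Ioi a, β y = k y * N * (h y : V →L[ℂ] V) := by
    intro y hy
    rw [← hPconst y hy, hP_def]
    have : k y * ((h y : V →L[ℂ] V) * β y * k y) * (h y : V →L[ℂ] V)
        = (k y * (h y : V →L[ℂ] V)) * β y * (k y * (h y : V →L[ℂ] V)) := by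
      simp only [mul_assoc]
    rw [this, hkh1 y, one_mul, mul_one]
  refine ⟨N, ha, ?_⟩
  -- part (b)
  intro Fo hFo
  have hNh : ∀ y ∈ Ioi a, N * (h y : V →L[ℂ] V) = (h y : V →L[ℂ] V) * β y := by
    intro y hy
    rw [ha y hy, ← mul_assoc, ← mul_assoc, hhk1 y, one_mul]
  set Ep : ℝ → V →L[ℂ] V := fun y => NormedSpace.exp ((Complex.I * (y : ℂ)) • N)
    with hEp_def
  set Em : ℝ → V →L[ℂ] V := fun y => NormedSpace.exp ((-(Complex.I * (y : ℂ))) • N)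
    with hEm_def
  have hEpEm : ∀ y, Ep y * Em y = 1 := by
    intro y
    letI : NormedAlgebra ℚ (V →L[ℂ] V) := .restrictScalars ℚ ℂ _
    rw [hEp_def, hEm_def, ← NormedSpace.exp_add_of_commute
      (((Commute.refl N).smul_left _).smul_right _)]
    simp
  have hEmEp : ∀ y, Em y * Ep y = 1 := by
    intro y
    letI : NormedAlgebra ℚ (V →L[ℂ] V) := .restrictScalars ℚ ℂ _
    rw [hEp_def, hEm_def, ← NormedSpace.exp_add_of_commute
      (((Commute.refl N).smul_left _).smul_right _)]
    simp
  set g : ℝ → V →L[ℂ] V := fun y => Em y * (h y : V →L[ℂ] V) with hg_def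
  have hinj_of : ∀ (A B : V →L[ℂ] V), A * B = 1 → Function.Injective B := by
    intro A B hAB v w hvw
    have h1 : (A * B) v = (A * B) w := by
      simp [ContinuousLinearMap.mul_apply, hvw]
    simpa [hAB] using h1
  have hg_linv : ∀ y, (k y * Ep y) * g y = 1 := by
    intro y
    rw [hg_def]
    calc (k y * Ep y) * (Em y * (h y : V →L[ℂ] V))
        = k y * ((Ep y * Em y) * (h y : V →L[ℂ] V)) := by simp only [mul_assoc]
      _ = 1 := by rw [hEpEm y, one_mul, hkh1 y]
  have hg_inj : ∀ y, Function.Injective (g y) := fun y => hinj_of _ _ (hg_linv y)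
  -- derivative of Em
  have hEm' : ∀ y : ℝ, HasDerivAt Em ((-Complex.I) • (Em y * N)) y := by
    intro y
    have hc : HasDerivAt (fun t : ℝ => -(Complex.I * (t : ℂ))) (-Complex.I) y := by
      have h1 : HasDerivAt (fun t : ℝ => (t : ℂ)) 1 y := by
        exact (Complex.ofRealCLM.hasDerivAt (x := y)).congr_deriv (by simp)
      exact ((h1.const_mul Complex.I).neg).congr_deriv (by simp)
    have h2 : HasDerivAt Em ((-Complex.I) • (Em y * N)) y := by
      have h3 := (hasDerivAt_exp_smul_const (𝕂 := ℂ) N (-(Complex.I * (y : ℂ)))).scomp y hc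
      exact h3
    exact h2
  set Bc : ℝ → V →L[ℂ] V := fun t => Complex.I • β t + L (β t) with hBc_def
  have hg' : ∀ y ∈ Ioi a, HasDerivAt g (-(g y * Bc y)) y := by
    intro y hy
    have h1 := (hEm' y).mul (hh y hy)
    refine h1.congr_deriv ?_
    symm
    have h2 : Em y * N * (h y : V →L[ℂ] V) = Em y * ((h y : V →L[ℂ] V) * β y) := by
      rw [mul_assoc, hNh y hy]
    rw [hg_def, hBc_def]
    simp only [smul_mul_assoc]
    rw [h2]
    simp only [mul_add, mul_neg, neg_add, mul_smul_comm, smul_mul_assoc, mul_assoc, neg_smul]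
  -- continuity of Bc on Ioi a
  have hβc : ContinuousOn β (Ioi a) := fun t ht =>
    (hβ t ht).continuousAt.continuousWithinAt
  have hBc_cont : ContinuousOn Bc (Ioi a) := by
    refine ContinuousOn.add ?_ ?_
    · exact hβc.const_smul Complex.I
    · exact (LinearMap.continuous_of_finiteDimensional L).comp_continuousOn hβc
  -- map composition helper
  have hmapmul : ∀ (A B : V →L[ℂ] V) (S : Submodule ℂ V),
      S.map ((A * B : V →L[ℂ] V) : V →ₗ[ℂ] V) = (S.map (B : V →ₗ[ℂ] V)).map (A : V →ₗ[ℂ] V) := by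
    intro A B S
    ext x
    simp only [Submodule.mem_map, ContinuousLinearMap.mul_apply]
    constructor
    · rintro ⟨v, hv, rfl⟩; exact ⟨B v, ⟨v, hv, rfl⟩, rfl⟩
    · rintro ⟨w, ⟨v, hv, rfl⟩, rfl⟩; exact ⟨v, hv, rfl⟩
  -- key: the image of Fo p under g y is constant
  have hkey : ∀ p : ℤ, ∀ y ∈ Ioi a, (Fo p).map (g y : V →ₗ[ℂ] V) = (Fo p).map (g y₀ : V →ₗ[ℂ] V) := by
    intro p y hy
    set W := Fo p with hW_def
    set U : Submodule ℂ V := W.map (g y₀ : V →ₗ[ℂ] V) with hU_def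
    obtain ⟨U', hcompl⟩ := Submodule.exists_isCompl U
    set π : V →ₗ[ℂ] U' := U'.linearProjOfIsCompl U hcompl.symm with hπ_def
    have hker : LinearMap.ker π = U := Submodule.linearProjOfIsCompl_ker hcompl.symm
    set πc : V →L[ℂ] U' := LinearMap.toContinuousLinearMap π with hπc_def
    set ι : W →L[ℂ] V := W.subtypeL with hι_def
    set Φ :=
      (ContinuousLinearMap.compL ℂ W V U' πc).comp
        ((ContinuousLinearMap.compL ℂ W V V).flip ι) with hΦ_def
    have hΦ_apply : ∀ (M : V →L[ℂ] V) (w : W), (Φ M) w = π (M (w : V)) := by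
      intro M w
      simp [hΦ_def, hπc_def, hι_def]
    set F : ℝ → (W →L[ℂ] U') := fun t => Φ (g t) with hF_def
    haveI : ContinuousSMul ℝ (W →L[ℂ] U') := by
      exact (NormedSpace.toIsBoundedSMul (𝕜 := ℝ) (E := W →L[ℂ] U')).continuousSMul
    have hF' : ∀ t ∈ Ioi a, HasDerivAt F (Φ (-(g t * Bc t))) t := by
      intro t ht
      have h0 : HasFDerivAt (⇑Φ) (Φ.restrictScalars ℝ) (g t) :=
        (Φ.hasFDerivAt (x := g t)).restrictScalars ℝ
      have h2 : HasDerivAt F (Φ (-(g t * Bc t))) t := h0.comp_hasDerivAt t (hg' t ht)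
      exact h2
    have hF0 : F y₀ = 0 := by
      ext w
      have hmem : g y₀ (w : V) ∈ U := ⟨(w : V), w.2, rfl⟩
      rw [← hker, LinearMap.mem_ker] at hmem
      simp [hF_def, hΦ_apply, hmem]
    -- the bound
    have hbound : ∀ c d : ℝ, a < c →
        ∃ K, ∀ t ∈ Icc c d, ‖Φ (-(g t * Bc t))‖ ≤ K * ‖F t‖ := by
      intro c d hc
      have hsub : Icc c d ⊆ Ioi a := fun t ht => lt_of_lt_of_le hc ht.1
      obtain ⟨K, hK⟩ := (isCompact_Icc (a := c) (b := d)).exists_bound_of_continuousOn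
        (hBc_cont.mono hsub)
      refine ⟨K, fun t ht => ?_⟩
      have ht' : t ∈ Ioi a := hsub ht
      -- restriction of Bc t to W
      set A : W →L[ℂ] W := LinearMap.toContinuousLinearMap
        (((-(Bc t)) : V →ₗ[ℂ] V).restrict
          (fun v hv => neg_mem (hFo t ht' p v hv))) with hA_def
      have hA_apply : ∀ w : W, ((A w : W) : V) = -(Bc t (w : V)) := by
        intro w; simp [hA_def, LinearMap.restrict_apply]
      have hFA : Φ (-(g t * Bc t)) = (F t).comp A := by
        ext w
        have h3 : (((F t).comp A) w : U') = π (g t ((A w : W) : V)) := by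
          simp [hF_def, hΦ_apply]
        simp only [hΦ_apply, h3, hA_apply, ContinuousLinearMap.neg_apply,
          ContinuousLinearMap.mul_apply, map_neg]
      rw [hFA]
      have hAle : ‖A‖ ≤ ‖Bc t‖ := by
        refine ContinuousLinearMap.opNorm_le_bound _ (norm_nonneg _) fun w => ?_
        have h4 : ‖A w‖ = ‖Bc t (w : V)‖ := by
          have h6 : ‖A w‖ = ‖((A w : W) : V)‖ := rfl
          rw [h6, hA_apply w, norm_neg]
        rw [h4]
        exact (Bc t).le_opNorm _
      calc ‖(F t).comp A‖ ≤ ‖F t‖ * ‖A‖ := ContinuousLinearMap.opNorm_comp_le _ _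
        _ ≤ ‖F t‖ * K := by
            exact mul_le_mul_of_nonneg_left (le_trans hAle (hK t ht))
              (ContinuousLinearMap.opNorm_nonneg _)
        _ = K * ‖F t‖ := mul_comm _ _
    have hFzero : ∀ t ∈ Ioi a, F t = 0 :=
      gron_zero2 (lt_add_one a) hF' (fun c d hc => hbound c d hc) hF0
    -- inclusion
    have hle : W.map (g y : V →ₗ[ℂ] V) ≤ U := by
      rintro x ⟨w, hw, rfl⟩
      have h1 : (F y) ⟨w, hw⟩ = 0 := by rw [hFzero y hy]; rfl
      rw [hF_def] at h1
      have h2 : π (g y w) = 0 := by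
        have := hΦ_apply (g y) ⟨w, hw⟩
        rw [h1] at this
        exact this.symm
      rw [← hker]
      exact h2
    -- equality of finranks
    have hrank : ∀ t : ℝ, Module.finrank ℂ (W.map (g t : V →ₗ[ℂ] V)) = Module.finrank ℂ W := by
      intro t
      have : W.map (g t : V →ₗ[ℂ] V) = W.map ((g t) : V →ₗ[ℂ] V) := rfl
      rw [this]
      exact ((Submodule.equivMapOfInjective ((g t) : V →ₗ[ℂ] V) (hg_inj t) W).finrank_eq).symm
    refine Submodule.eq_of_le_of_finrank_le hle ?_
    rw [hrank y, hU_def, hrank y₀]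
  refine ⟨fun p => (Fo p).map (g y₀ : V →ₗ[ℂ] V), fun y hy p => ?_⟩
  have hhy : Ep y * g y = (h y : V →L[ℂ] V) := by
    rw [hg_def, ← mul_assoc, hEpEm y, one_mul]
  calc (Fo p).map ((h y : V →L[ℂ] V) : V →ₗ[ℂ] V) = (Fo p).map ((Ep y * g y : V →L[ℂ] V) : V →ₗ[ℂ] V) := by rw [hhy]
    _ = ((Fo p).map (g y : V →ₗ[ℂ] V)).map (Ep y : V →ₗ[ℂ] V) := hmapmul _ _ _
    _ = ((Fo p).map (g y₀ : V →ₗ[ℂ] V)).map (Ep y : V →ₗ[ℂ] V) := by rw [hkey p y hy]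
end
end

section
/- Let E be a finite-dimensional complex normed vector space, B : E × E → E a bilinear map, a > 0, and (f_n)_{n≥0} a sequence in E such that Σ_{n≥0} ‖f_n‖ ρ^n < ∞ for every ρ < a^{−1/2}, so that f(y) = Σ_{n≥0} f_n y^{−1−n/2} converges for y > a. If −8·f'(y) = B(f(y), f(y)) for all y > a, then the coefficients satisfy (8 + 4n)·f_n = Σ_{k=0}^n B(f_k, f_{n−k}) for every n ≥ 0. -/
noncomputable section

set_option maxHeartbeats 1000000 in
/-- **Recursion for the coefficients of a series solution** (cf. (7.8)–(7.9)):
if `f(y) = Σ_{n≥0} c_n y^{-1-n/2}` converges for `y > a` and satisfies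
`-8 f'(y) = B(f(y), f(y))`, then `(8 + 4n) c_n = Σ_{k=0}^n B(c_k, c_{n-k})`. -/
theorem series_solution_recursion
    {E : Type*} [NormedAddCommGroup E] [NormedSpace ℂ E] [FiniteDimensional ℂ E]
    (B : E →ₗ[ℂ] E →ₗ[ℂ] E) (a : ℝ) (ha : 0 < a)
    (c : ℕ → E)
    (hconv : ∀ ρ : ℝ, 0 ≤ ρ → ρ < (Real.sqrt a)⁻¹ →
      Summable fun n : ℕ => ‖c n‖ * ρ ^ n)
    (f : ℝ → E)
    (hf : ∀ y : ℝ, a < y → f y = ∑' n : ℕ, Real.rpow y (-1 - (n : ℝ) / 2) • c n)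
    (hode : ∀ y : ℝ, a < y → HasDerivAt f (-(8 : ℂ)⁻¹ • B (f y) (f y)) y) :
    ∀ n : ℕ, ((8 : ℂ) + 4 * (n : ℂ)) • c n
      = ∑ k ∈ Finset.range (n + 1), B (c k) (c (n - k)) := by
  classical
  set r : ℝ := (Real.sqrt a)⁻¹ with hr_def
  have hr : 0 < r := inv_pos.2 (Real.sqrt_pos.2 ha)
  have hr_eq : r = a ^ (-2⁻¹ : ℝ) := by
    rw [hr_def, Real.sqrt_eq_rpow, ← Real.rpow_neg ha.le]
    norm_num
  -- continuous bilinear version of `B`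
  let L : E →L[ℂ] E →L[ℂ] E :=
    LinearMap.toContinuousLinearMap
      ((LinearMap.toContinuousLinearMap :
          (E →ₗ[ℂ] E) ≃ₗ[ℂ] (E →L[ℂ] E)).toLinearMap.comp B)
  have hL : ∀ x z : E, L x z = B x z := fun x z => rfl
  -- master summability lemma
  have key : ∀ ρ : ℝ, 0 ≤ ρ → ρ < r →
      Summable (fun n : ℕ => ((n : ℝ) + 1) * (‖c n‖ * ρ ^ n)) := by
    intro ρ hρ0 hρr
    set ρ' : ℝ := (ρ + r) / 2 with hρ'def
    have hρ'0 : 0 < ρ' := by rw [hρ'def]; positivity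
    have h1 : ρ < ρ' := by rw [hρ'def]; linarith
    have h2 : ρ' < r := by rw [hρ'def]; linarith
    have hs := hconv ρ' hρ'0.le h2
    obtain ⟨M, hM⟩ : ∃ M : ℝ, ∀ n, ‖c n‖ * ρ' ^ n ≤ M := by
      obtain ⟨M, hM⟩ := hs.tendsto_atTop_zero.bddAbove_range
      exact ⟨M, fun n => hM ⟨n, rfl⟩⟩
    set t : ℝ := ρ / ρ' with ht_def
    have ht0 : 0 ≤ t := div_nonneg hρ0 hρ'0.le
    have ht1 : t < 1 := (div_lt_one hρ'0).2 h1
    have hsum : Summable fun n : ℕ => M * (((n : ℝ) + 1) * t ^ n) := by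
      apply Summable.mul_left
      have h3 : Summable fun n : ℕ => (n : ℝ) ^ 1 * t ^ n :=
        summable_pow_mul_geometric_of_norm_lt_one 1
          (by rwa [Real.norm_eq_abs, abs_of_nonneg ht0])
      have h4 : Summable fun n : ℕ => t ^ n := summable_geometric_of_lt_one ht0 ht1
      refine (h3.add h4).congr fun n => ?_
      simp [pow_one]; ring
    refine Summable.of_nonneg_of_le (fun n => by positivity) (fun n => ?_) hsum
    have hρn : ρ ^ n = t ^ n * ρ' ^ n := by
      rw [ht_def, div_pow, div_mul_cancel₀]
      exact pow_ne_zero _ hρ'0.ne'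
    calc ((n : ℝ) + 1) * (‖c n‖ * ρ ^ n)
        = (((n : ℝ) + 1) * t ^ n) * (‖c n‖ * ρ' ^ n) := by rw [hρn]; ring
      _ ≤ (((n : ℝ) + 1) * t ^ n) * M := mul_le_mul_of_nonneg_left (hM n) (by positivity)
      _ = M * (((n : ℝ) + 1) * t ^ n) := mul_comm _ _
  -- rpow decomposition
  have hdec : ∀ {y : ℝ}, 0 < y → ∀ (e : ℝ) (n : ℕ),
      Real.rpow y (e - n / 2) = y ^ e * (y ^ (-2⁻¹ : ℝ)) ^ n := by
    intro y hy e n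
    rw [Real.rpow_eq_pow, ← Real.rpow_natCast (y ^ (-2⁻¹ : ℝ)) n, ← Real.rpow_mul hy.le,
      ← Real.rpow_add hy]
    congr 1
    ring
  have hρy : ∀ {y : ℝ}, a < y → y ^ (-2⁻¹ : ℝ) < r := by
    intro y hy
    rw [hr_eq]
    exact Real.rpow_lt_rpow_of_neg ha hy (by norm_num)
  -- summability of the series defining f
  have S1 : ∀ {y : ℝ}, a < y →
      Summable (fun n : ℕ => Real.rpow y (-1 - (n:ℝ)/2) • c n) := by
    intro y hy
    have hy0 : 0 < y := ha.trans hy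
    have hk := (key _ (Real.rpow_pos_of_pos hy0 (-2⁻¹ : ℝ)).le (hρy hy)).mul_left (y ^ (-1:ℝ))
    apply Summable.of_norm
    refine Summable.of_nonneg_of_le (fun n => norm_nonneg _) (fun n => ?_) hk
    rw [norm_smul, Real.norm_eq_abs, hdec hy0 (-1) n, abs_of_pos (by positivity)]
    have h1 : (1:ℝ) ≤ (n:ℝ) + 1 := by
      have := Nat.cast_nonneg (α := ℝ) n; linarith
    have base : (0:ℝ) ≤ y ^ (-1:ℝ) * ((y ^ (-2⁻¹:ℝ)) ^ n * ‖c n‖) := by positivity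
    calc y ^ (-1:ℝ) * (y ^ (-2⁻¹:ℝ)) ^ n * ‖c n‖
        = 1 * (y ^ (-1:ℝ) * ((y ^ (-2⁻¹:ℝ)) ^ n * ‖c n‖)) := by ring
      _ ≤ ((n:ℝ)+1) * (y ^ (-1:ℝ) * ((y ^ (-2⁻¹:ℝ)) ^ n * ‖c n‖)) :=
          mul_le_mul_of_nonneg_right h1 base
      _ = y ^ (-1:ℝ) * (((n:ℝ)+1) * (‖c n‖ * (y ^ (-2⁻¹:ℝ)) ^ n)) := by ring
  -- summability of the "A-side" series
  have Sa : ∀ {y : ℝ}, a < y → Summable (fun n : ℕ =>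
      Real.rpow y (-2 - (n:ℝ)/2) • (((8:ℂ) + 4*(n:ℂ)) • c n)) := by
    intro y hy
    have hy0 : 0 < y := ha.trans hy
    have hk := (key _ (Real.rpow_pos_of_pos hy0 (-2⁻¹ : ℝ)).le (hρy hy)).mul_left
      (8 * y ^ (-2:ℝ))
    apply Summable.of_norm
    refine Summable.of_nonneg_of_le (fun n => norm_nonneg _) (fun n => ?_) hk
    rw [norm_smul, norm_smul, Real.norm_eq_abs, hdec hy0 (-2) n, abs_of_pos (by positivity)]
    have h8 : ‖(8:ℂ) + 4*(n:ℂ)‖ = 8 + 4*(n:ℝ) := by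
      rw [show (8:ℂ) + 4*(n:ℂ) = (((8 + 4*(n:ℝ) : ℝ)) : ℂ) by push_cast; ring,
        Complex.norm_real, Real.norm_eq_abs, abs_of_pos (by positivity)]
    rw [h8]
    have h1 : 8 + 4*(n:ℝ) ≤ 8 * ((n:ℝ)+1) := by
      have := Nat.cast_nonneg (α := ℝ) n; linarith
    have base : (0:ℝ) ≤ y ^ (-2:ℝ) * ((y ^ (-2⁻¹:ℝ)) ^ n * ‖c n‖) := by positivity
    calc y ^ (-2:ℝ) * (y ^ (-2⁻¹:ℝ)) ^ n * ((8 + 4*(n:ℝ)) * ‖c n‖)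
        = (8 + 4*(n:ℝ)) * (y ^ (-2:ℝ) * ((y ^ (-2⁻¹:ℝ)) ^ n * ‖c n‖)) := by ring
      _ ≤ (8 * ((n:ℝ)+1)) * (y ^ (-2:ℝ) * ((y ^ (-2⁻¹:ℝ)) ^ n * ‖c n‖)) :=
          mul_le_mul_of_nonneg_right h1 base
      _ = 8 * y ^ (-2:ℝ) * (((n:ℝ)+1) * (‖c n‖ * (y ^ (-2⁻¹:ℝ)) ^ n)) := by ring
  -- termwise differentiation
  have HD : ∀ {y : ℝ}, a < y →
      HasDerivAt f (∑' n : ℕ, ((-1 - (n:ℝ)/2) * Real.rpow y (-2 - (n:ℝ)/2)) • c n) y := by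
    intro y hy
    have hy0 : 0 < y := ha.trans hy
    set b : ℝ := (a + y) / 2 with hb_def
    have hab : a < b := by rw [hb_def]; linarith
    have hby : b < y := by rw [hb_def]; linarith
    have hb0 : 0 < b := ha.trans hab
    set ρ : ℝ := b ^ (-2⁻¹ : ℝ) with hρ_def
    have hρ0 : 0 < ρ := Real.rpow_pos_of_pos hb0 _
    have hρr : ρ < r := hρy hab
    set u : ℕ → ℝ := fun n => b ^ (-2:ℝ) * (((n:ℝ)+1) * (‖c n‖ * ρ ^ n)) with hu_def
    have hu : Summable u := (key ρ hρ0.le hρr).mul_left _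
    have main : HasDerivAt (fun z : ℝ => ∑' n : ℕ, Real.rpow z (-1 - (n:ℝ)/2) • c n)
        (∑' n : ℕ, ((-1 - (n:ℝ)/2) * Real.rpow y (-2 - (n:ℝ)/2)) • c n) y := by
      apply hasDerivAt_tsum_of_isPreconnected (𝕜 := ℝ) (F := E)
        (g := fun (n : ℕ) (z : ℝ) => Real.rpow z (-1 - (n:ℝ)/2) • c n)
        (g' := fun (n : ℕ) (z : ℝ) => ((-1 - (n:ℝ)/2) * Real.rpow z (-2 - (n:ℝ)/2)) • c n)
        hu isOpen_Ioi isPreconnected_Ioi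
        ?_ ?_ (Set.mem_Ioi.2 hby) (S1 hy) (Set.mem_Ioi.2 hby)
      · intro n z hz
        have hz0 : 0 < z := hb0.trans hz
        have h := (Real.hasDerivAt_rpow_const (x := z) (p := -1 - (n:ℝ)/2)
          (Or.inl hz0.ne')).smul_const (c n)
        have e0 : (-2 : ℝ) - (n:ℝ)/2 = (-1 - (n:ℝ)/2) - 1 := by ring
        show HasDerivAt (fun w : ℝ => Real.rpow w (-1 - (n:ℝ)/2) • c n)
          (((-1 - (n:ℝ)/2) * Real.rpow z (-2 - (n:ℝ)/2)) • c n) z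
        rw [e0]
        exact h
      · intro n z hz
        have hz0 : 0 < z := hb0.trans (Set.mem_Ioi.1 hz)
        have hze : (0:ℝ) < Real.rpow z (-2 - (n:ℝ)/2) := Real.rpow_pos_of_pos hz0 _
        have hnn : (0:ℝ) ≤ (n:ℝ) := Nat.cast_nonneg n
        have habs : ‖((-1 - (n:ℝ)/2) * Real.rpow z (-2 - (n:ℝ)/2)) • c n‖
            = ((1 + (n:ℝ)/2) * Real.rpow z (-2 - (n:ℝ)/2)) * ‖c n‖ := by
          rw [norm_smul, Real.norm_eq_abs, abs_mul, abs_of_pos hze,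
            abs_of_neg (show -1 - (n:ℝ)/2 < 0 by linarith)]
          ring
        rw [habs]
        have e1 : Real.rpow z (-2 - (n:ℝ)/2) ≤ Real.rpow b (-2 - (n:ℝ)/2) :=
          Real.rpow_le_rpow_of_nonpos hb0 (Set.mem_Ioi.1 hz).le (by linarith)
        have e2 : (1 + (n:ℝ)/2) ≤ (n:ℝ) + 1 := by linarith
        calc ((1 + (n:ℝ)/2) * Real.rpow z (-2 - (n:ℝ)/2)) * ‖c n‖
            ≤ (((n:ℝ)+1) * Real.rpow b (-2 - (n:ℝ)/2)) * ‖c n‖ := by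
              apply mul_le_mul_of_nonneg_right _ (norm_nonneg _)
              exact mul_le_mul e2 e1 hze.le (by positivity)
          _ = u n := by rw [hdec hb0 (-2) n, hu_def]; ring
    have heq : f =ᶠ[nhds y] fun z : ℝ => ∑' n : ℕ, Real.rpow z (-1 - (n:ℝ)/2) • c n := by
      filter_upwards [isOpen_Ioi.mem_nhds (Set.mem_Ioi.2 hy)] with z hz
      exact hf z hz
    exact main.congr_of_eventuallyEq heq
  -- the A-side identity
  have EqA : ∀ {y : ℝ}, a < y →
      B (f y) (f y) = ∑' n : ℕ, Real.rpow y (-2 - (n:ℝ)/2) • (((8:ℂ) + 4*(n:ℂ)) • c n) := by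
    intro y hy
    have h1 := (hode y hy).unique (HD hy)
    have h2 : B (f y) (f y)
        = (-8:ℂ) • ∑' n : ℕ, ((-1 - (n:ℝ)/2) * Real.rpow y (-2 - (n:ℝ)/2)) • c n := by
      rw [← h1, smul_smul]
      norm_num
    rw [h2, ← tsum_const_smul'' ((-8:ℂ))]
    refine tsum_congr fun n => ?_
    rw [show ((-1 - (n:ℝ)/2) * Real.rpow y (-2 - (n:ℝ)/2)) • c n
        = Real.rpow y (-2 - (n:ℝ)/2) • ((-1 - (n:ℝ)/2) • c n) by rw [mul_comm, mul_smul]]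
    rw [smul_comm]
    congr 1
    rw [← Complex.coe_smul, smul_smul]
    congr 1
    push_cast
    ring
  -- the B-side identity (Cauchy product)
  have EqB : ∀ {y : ℝ}, a < y →
      (B (f y) (f y) = ∑' n : ℕ, Real.rpow y (-2 - (n:ℝ)/2) •
          (∑ k ∈ Finset.range (n+1), B (c k) (c (n-k)))
        ∧ Summable (fun n : ℕ => Real.rpow y (-2 - (n:ℝ)/2) •
          (∑ k ∈ Finset.range (n+1), B (c k) (c (n-k))))) := by
    intro y hy
    have hy0 : 0 < y := ha.trans hy
    obtain ⟨w, hw_def⟩ : ∃ w : ℕ → E, w = fun n : ℕ => Real.rpow y (-1 - (n:ℝ)/2) • c n :=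
      ⟨_, rfl⟩
    have Sw : Summable w := by rw [hw_def]; exact S1 hy
    have Swn : Summable fun n => ‖w n‖ := summable_norm_iff.2 Sw
    have SF : Summable (fun p : ℕ × ℕ => (‖L‖ * ‖w p.1‖) * ‖w p.2‖) :=
      Summable.mul_of_nonneg (Swn.mul_left ‖L‖) Swn
        (fun n => by positivity) (fun n => norm_nonneg _)
    obtain ⟨F, hF_def⟩ : ∃ F : ℕ × ℕ → E, F = fun p => B (w p.1) (w p.2) := ⟨_, rfl⟩
    have SummF : Summable F := by
      rw [hF_def]
      apply Summable.of_norm_bounded SF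
      intro p
      calc ‖B (w p.1) (w p.2)‖ = ‖L (w p.1) (w p.2)‖ := by rw [hL]
        _ ≤ ‖L (w p.1)‖ * ‖w p.2‖ := (L (w p.1)).le_opNorm _
        _ ≤ (‖L‖ * ‖w p.1‖) * ‖w p.2‖ :=
            mul_le_mul_of_nonneg_right (L.le_opNorm _) (norm_nonneg _)
    have step1 : B (f y) (f y) = ∑' n : ℕ, ∑' m : ℕ, B (w n) (w m) := by
      have h1 : ∀ v : E, B (∑' n, w n) v = ∑' n, B (w n) v := by
        intro v
        have h := (L.flip v).map_tsum Sw
        simpa [hL] using h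
      have h2 : ∀ n, B (w n) (∑' m, w m) = ∑' m, B (w n) (w m) := by
        intro n
        have h := (L (w n)).map_tsum Sw
        simpa [hL] using h
      calc B (f y) (f y) = B (∑' n, w n) (∑' m, w m) := by rw [hf y hy, hw_def]
        _ = ∑' n, B (w n) (∑' m, w m) := h1 _
        _ = ∑' n, ∑' m, B (w n) (w m) := tsum_congr h2
    have step2 : ∑' (p : ℕ × ℕ), F p = ∑' n : ℕ, ∑' m : ℕ, B (w n) (w m) := by
      rw [hF_def] at SummF ⊢
      exact Summable.tsum_prod' SummF (fun n => SummF.prod_factor n)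
    have SummS : Summable (fun x : Σ n : ℕ, Finset.HasAntidiagonal.antidiagonal n => F (x.2 : ℕ × ℕ)) :=
      Finset.HasAntidiagonal.sigmaAntidiagonalEquivProd.summable_iff.2 SummF
    have step3 : ∑' (p : ℕ × ℕ), F p
        = ∑' n : ℕ, ∑' (kl : Finset.HasAntidiagonal.antidiagonal n), F (kl : ℕ × ℕ) := by
      rw [← Finset.HasAntidiagonal.sigmaAntidiagonalEquivProd.tsum_eq F]
      exact Summable.tsum_sigma' (fun n => (hasSum_fintype _).summable) SummS
    have inner : ∀ n : ℕ, (∑' (kl : Finset.HasAntidiagonal.antidiagonal n), F (kl : ℕ × ℕ))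
        = Real.rpow y (-2 - (n:ℝ)/2) • (∑ k ∈ Finset.range (n+1), B (c k) (c (n-k))) := by
      intro n
      rw [tsum_fintype, Finset.sum_coe_sort (Finset.HasAntidiagonal.antidiagonal n) F,
        ← Finset.Nat.sum_antidiagonal_eq_sum_range_succ (fun k l => B (c k) (c l)),
        Finset.smul_sum]
      apply Finset.sum_congr rfl
      rintro ⟨k, l⟩ hkl
      have hn : k + l = n := Finset.HasAntidiagonal.mem_antidiagonal.1 hkl
      rw [hF_def, hw_def]
      show B (Real.rpow y (-1-(k:ℝ)/2) • c k) (Real.rpow y (-1-(l:ℝ)/2) • c l)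
          = Real.rpow y (-2 - (n:ℝ)/2) • B (c k) (c l)
      simp only [LinearMap.map_smul_of_tower, LinearMap.smul_apply, smul_smul]
      simp only [Real.rpow_eq_pow]
      rw [← Real.rpow_add hy0]
      congr 1
      subst hn
      push_cast
      ring
    refine ⟨?_, ?_⟩
    · rw [step1, ← step2, step3]
      exact tsum_congr inner
    · exact (SummS.sigma).congr fun n => by rw [← inner n, tsum_fintype]
  -- the coefficient difference
  obtain ⟨d, hd_def⟩ : ∃ d : ℕ → E, d = fun n : ℕ =>
      ((8:ℂ) + 4*(n:ℂ)) • c n - ∑ k ∈ Finset.range (n+1), B (c k) (c (n-k)) := ⟨_, rfl⟩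
  have Hd : ∀ {y : ℝ}, a < y →
      (∑' n : ℕ, Real.rpow y (-2 - (n:ℝ)/2) • d n = 0
        ∧ Summable fun n : ℕ => Real.rpow y (-2 - (n:ℝ)/2) • d n) := by
    intro y hy
    obtain ⟨hB, Sb⟩ := EqB hy
    have hA := EqA hy
    have SA := Sa hy
    have hdn : (fun n : ℕ => Real.rpow y (-2 - (n:ℝ)/2) • d n)
        = fun n : ℕ => Real.rpow y (-2 - (n:ℝ)/2) • (((8:ℂ)+4*(n:ℂ)) • c n)
          - Real.rpow y (-2 - (n:ℝ)/2) • (∑ k ∈ Finset.range (n+1), B (c k) (c (n-k))) := by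
      funext n
      simp only [hd_def]
      rw [smul_sub]
    constructor
    · rw [hdn, Summable.tsum_sub SA Sb, ← hA, ← hB, sub_self]
    · rw [hdn]; exact SA.sub Sb
  -- reparametrize by x = y^{-1/2}
  have Hx : ∀ x : ℝ, 0 < x → x < r →
      (∑' n : ℕ, x ^ n • d n = 0 ∧ Summable fun n : ℕ => x ^ n • d n) := by
    intro x hx0 hxr
    have hay : a < x ^ (-2:ℝ) := by
      have h1 : r ^ (-2:ℝ) < x ^ (-2:ℝ) :=
        Real.rpow_lt_rpow_of_neg hx0 hxr (by norm_num)
      have h2 : r ^ (-2:ℝ) = a := by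
        rw [hr_eq, ← Real.rpow_mul ha.le]
        norm_num
      rwa [h2] at h1
    obtain ⟨hz, hs⟩ := Hd hay
    have hrw : ∀ n : ℕ, Real.rpow (x ^ (-2:ℝ)) (-2 - (n:ℝ)/2) = x ^ (4:ℕ) * x ^ n := by
      intro n
      rw [Real.rpow_eq_pow, ← Real.rpow_mul hx0.le,
        show (-2:ℝ) * (-2 - (n:ℝ)/2) = ((4 + n : ℕ) : ℝ) by push_cast; ring,
        Real.rpow_natCast, pow_add]
    have hfun : (fun n : ℕ => Real.rpow (x ^ (-2:ℝ)) (-2 - (n:ℝ)/2) • d n)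
        = fun n : ℕ => (x ^ (4:ℕ) : ℝ) • (x ^ n • d n) := by
      funext n
      rw [hrw n, mul_smul]
    rw [hfun] at hz hs
    have hx4 : (x:ℝ) ^ (4:ℕ) ≠ 0 := pow_ne_zero _ hx0.ne'
    constructor
    · rw [tsum_const_smul'' (x ^ (4:ℕ) : ℝ)] at hz
      have h := congrArg (fun v : E => ((x ^ (4:ℕ) : ℝ))⁻¹ • v) hz
      simpa [smul_smul, inv_mul_cancel₀ hx4] using h
    · have h := hs.const_smul ((x ^ (4:ℕ) : ℝ)⁻¹)
      refine h.congr fun n => ?_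
      rw [smul_smul, inv_mul_cancel₀ hx4, one_smul]
  -- induction: all coefficients of the difference vanish
  have hρ0' : (0:ℝ) < r/2 := by positivity
  have hρr' : r/2 < r := by linarith
  have hDsum : Summable (fun n : ℕ => ‖d n‖ * (r/2) ^ n) := by
    have h1 := (Hx (r/2) hρ0' hρr').2
    have h2 : Summable fun n : ℕ => ‖(r/2) ^ n • d n‖ := summable_norm_iff.2 h1
    refine h2.congr fun n => ?_
    rw [norm_smul, Real.norm_eq_abs, abs_of_nonneg (by positivity), mul_comm]
  have hzero : ∀ n, d n = 0 := by
    intro n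
    induction n using Nat.strong_induction_on with
    | _ n IH =>
    have hC : Summable (fun k : ℕ => ‖d (k + 1 + n)‖ * (r/2) ^ k) := by
      have h1 := (summable_nat_add_iff (f := fun m : ℕ => ‖d m‖ * (r/2) ^ m) (n+1)).2 hDsum
      have h2 := h1.mul_right (((r:ℝ)/2) ^ (n+1))⁻¹
      refine h2.congr fun k => ?_
      rw [show k + (n+1) = k + 1 + n by omega, pow_add]
      have hr2 : ((r:ℝ)/2) ^ (n+1) ≠ 0 := pow_ne_zero _ hρ0'.ne'
      field_simp
      ring
    set C := ∑' k : ℕ, ‖d (k + 1 + n)‖ * (r/2) ^ k with hC_def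
    have hbound : ∀ x : ℝ, 0 < x → x ≤ r/2 → ‖d n‖ ≤ C * x := by
      intro x hx0 hxρ
      have hxr : x < r := lt_of_le_of_lt hxρ hρr'
      obtain ⟨hx_eq, hx_sum⟩ := Hx x hx0 hxr
      have hfin : ∑ i ∈ Finset.range n, x ^ i • d i = 0 :=
        Finset.sum_eq_zero fun i hi => by rw [IH i (Finset.mem_range.1 hi), smul_zero]
      have h6 : ∑' k : ℕ, x ^ (k + n) • d (k + n) = 0 := by
        have h := Summable.sum_add_tsum_nat_add (f := fun k : ℕ => x ^ k • d k) n hx_sum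
        rw [hfin, zero_add, hx_eq] at h
        exact h
      have hxn : (x:ℝ) ^ n ≠ 0 := pow_ne_zero _ hx0.ne'
      have h8 : Summable fun k : ℕ => x ^ k • d (k + n) := by
        have h1 := (summable_nat_add_iff (f := fun k : ℕ => x ^ k • d k) n).2 hx_sum
        have h2 := h1.const_smul ((x ^ n : ℝ)⁻¹)
        refine h2.congr fun k => ?_
        rw [smul_smul, pow_add, show ((x:ℝ)^n)⁻¹ * (x^k * x^n) = x^k by field_simp]
      have h7 : ∑' k : ℕ, x ^ k • d (k + n) = 0 := by
        have heq : (fun k : ℕ => x ^ (k+n) • d (k+n))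
            = fun k : ℕ => (x ^ n : ℝ) • (x ^ k • d (k+n)) := by
          funext k
          rw [smul_smul, pow_add, mul_comm]
        rw [heq, tsum_const_smul'' (x ^ n : ℝ)] at h6
        have h := congrArg (fun v : E => ((x ^ n : ℝ))⁻¹ • v) h6
        simpa [smul_smul, inv_mul_cancel₀ hxn] using h
      have h9 := Summable.tsum_eq_zero_add h8
      rw [h7] at h9
      have h11 : x ^ 0 • d (0 + n) = - ∑' k : ℕ, x ^ (k+1) • d (k+1+n) :=
        eq_neg_of_add_eq_zero_left h9.symm
      simp only [pow_zero, one_smul, zero_add] at h11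
      have hnorm_sum : Summable fun k : ℕ => ‖x ^ (k+1) • d (k+1+n)‖ := by
        have h1 := (summable_nat_add_iff (f := fun k : ℕ => x ^ k • d (k+n)) 1).2 h8
        exact summable_norm_iff.2 h1
      calc ‖d n‖ = ‖∑' k : ℕ, x ^ (k+1) • d (k+1+n)‖ := by rw [h11, norm_neg]
        _ ≤ ∑' k : ℕ, ‖x ^ (k+1) • d (k+1+n)‖ := norm_tsum_le_tsum_norm hnorm_sum
        _ ≤ ∑' k : ℕ, (‖d (k+1+n)‖ * (r/2) ^ k) * x := by
            apply Summable.tsum_le_tsum _ hnorm_sum (hC.mul_right x)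
            intro k
            rw [norm_smul, Real.norm_eq_abs, abs_of_nonneg (by positivity)]
            have hxk : x ^ (k+1) ≤ (r/2) ^ k * x := by
              rw [pow_succ]
              exact mul_le_mul_of_nonneg_right (pow_le_pow_left₀ hx0.le hxρ k) hx0.le
            calc x ^ (k+1) * ‖d (k+1+n)‖ ≤ ((r/2) ^ k * x) * ‖d (k+1+n)‖ :=
                  mul_le_mul_of_nonneg_right hxk (norm_nonneg _)
              _ = (‖d (k+1+n)‖ * (r/2) ^ k) * x := by ring
        _ = (∑' k : ℕ, ‖d (k+1+n)‖ * (r/2) ^ k) * x := by rw [tsum_mul_right]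
        _ = C * x := by rw [hC_def]
    have hle : ‖d n‖ ≤ 0 := by
      have lim : Filter.Tendsto (fun x : ℝ => C * x)
          (nhdsWithin 0 (Set.Ioi 0)) (nhds 0) := by
        have h : Filter.Tendsto (fun x : ℝ => C * x) (nhds 0) (nhds (C * 0)) :=
          (continuous_const.mul continuous_id).tendsto 0
        rw [mul_zero] at h
        exact h.mono_left nhdsWithin_le_nhds
      refine ge_of_tendsto lim ?_
      filter_upwards [Ioc_mem_nhdsGT_of_mem (Set.mem_Ico.mpr ⟨le_refl (0:ℝ), hρ0'⟩)] with x hx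
      exact hbound x hx.1 hx.2
    exact norm_le_zero_iff.1 hle
  -- conclude
  intro n
  have h := hzero n
  simp only [hd_def] at h
  exact sub_eq_zero.1 h
end
end
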